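/- arXiv:2407.18073 — 3 statements merged into one kernel-verified Lean document; each statement's English description precedes it below -/
import Mathlib

section
/- Let A be a Banach–Tate ring, M a Banach A-module, and P a finite Banach A-module, i.e. a Banach A-module that is finitely generated as an A-module. Then every A-linear map φ:P→M (with no continuity assumption) is continuous. -/
open scoped Classical

universe u v w

/-- A (non-archimedean, submultiplicative) ring norm with values in `ℝ`. -/
structure IsRingNorm {A : Type*} [Ring A] (v : A → ℝ) : Prop where
  nonneg : ∀ a, 0 ≤ v a
  eq_zero_iff : ∀ a, v a = 0 ↔ a = 0
  map_one : v 1 = 1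
  map_neg : ∀ a, v (-a) = v a
  add_le : ∀ a b, v (a + b) ≤ max (v a) (v b)
  mul_le : ∀ a b, v (a * b) ≤ v a * v b

theorem IsRingNorm.map_zero {A : Type*} [Ring A] {v : A → ℝ} (hv : IsRingNorm v) :
    v 0 = 0 := (hv.eq_zero_iff 0).mpr rfl

/-- A norm on an `A`-module, compatible with a ring norm `v` on `A`. -/
structure IsModuleNorm {A : Type*} [Ring A] (v : A → ℝ) {M : Type*} [AddCommGroup M]
    [Module A M] (nm : M → ℝ) : Prop where
  nonneg : ∀ m, 0 ≤ nm m
  eq_zero_iff : ∀ m, nm m = 0 ↔ m = 0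
  map_neg : ∀ m, nm (-m) = nm m
  add_le : ∀ m n, nm (m + n) ≤ max (nm m) (nm n)
  smul_le : ∀ (a : A) (m : M), nm (a • m) ≤ v a * nm m

/-- A sequence is Cauchy with respect to a norm. -/
def NormCauchy {M : Type*} [AddCommGroup M] (nm : M → ℝ) (s : ℕ → M) : Prop :=
  ∀ ε : ℝ, 0 < ε → ∃ N : ℕ, ∀ i j : ℕ, N ≤ i → N ≤ j → nm (s i - s j) < ε

/-- A sequence converges to `x` with respect to a norm. -/
def NormLim {M : Type*} [AddCommGroup M] (nm : M → ℝ) (s : ℕ → M) (x : M) : Prop :=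
  ∀ ε : ℝ, 0 < ε → ∃ N : ℕ, ∀ i : ℕ, N ≤ i → nm (s i - x) < ε

/-- Completeness: every Cauchy sequence converges. -/
def NormComplete {M : Type*} [AddCommGroup M] (nm : M → ℝ) : Prop :=
  ∀ s : ℕ → M, NormCauchy nm s → ∃ x : M, NormLim nm s x

/-- Continuity of a map between modules equipped with norms. -/
def NormContinuous {M N : Type*} [AddCommGroup M] [AddCommGroup N]
    (nmM : M → ℝ) (nmN : N → ℝ) (f : M → N) : Prop :=
  ∀ m : M, ∀ ε : ℝ, 0 < ε → ∃ δ : ℝ, 0 < δ ∧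
    ∀ m' : M, nmM (m' - m) < δ → nmN (f m' - f m) < ε

/-- A Banach–Tate ring: a complete normed ring containing a multiplicative
topologically nilpotent unit. -/
structure IsBanachTate {A : Type*} [Ring A] (v : A → ℝ) : Prop where
  isRingNorm : IsRingNorm v
  complete : NormComplete v
  exists_unit : ∃ ϖ : A, IsUnit ϖ ∧ v ϖ < 1 ∧ ∀ b, v (ϖ * b) = v ϖ * v b

namespace AutoContAux

variable {A : Type*} [Ring A] {v : A → ℝ} {M : Type*} [AddCommGroup M] [Module A M] {nm : M → ℝ}

theorem map_zero' (h : IsModuleNorm v nm) : nm 0 = 0 := (h.eq_zero_iff 0).mpr rfl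

theorem sub_le' (h : IsModuleNorm v nm) (a c b : M) :
    nm (a - b) ≤ max (nm (a - c)) (nm (c - b)) := by
  have := h.add_le (a - c) (c - b)
  rwa [sub_add_sub_cancel] at this

theorem sub_comm' (h : IsModuleNorm v nm) (a b : M) : nm (a - b) = nm (b - a) := by
  rw [← h.map_neg, neg_sub]

theorem eq_of_forall_lt (h : IsModuleNorm v nm) {m : M} (hm : ∀ ε : ℝ, 0 < ε → nm m < ε) :
    m = 0 := by
  refine (h.eq_zero_iff m).mp (le_antisymm ?_ (h.nonneg m))
  by_contra hc
  exact absurd (hm (nm m) (lt_of_not_ge hc)) (lt_irrefl _)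

theorem finsetSum_le (h : IsModuleNorm v nm) {ι : Type*} (s : Finset ι)
    (f : ι → M) (r : ℝ) (hr : 0 ≤ r) (hf : ∀ i ∈ s, nm (f i) ≤ r) :
    nm (∑ i ∈ s, f i) ≤ r := by
  classical
  induction s using Finset.induction with
  | empty => simpa [map_zero' h]
  | @insert a s ha ih =>
    rw [Finset.sum_insert ha]
    exact le_trans (h.add_le _ _)
      (max_le (hf _ (Finset.mem_insert_self _ _)) (ih fun i hi => hf _ (Finset.mem_insert_of_mem hi)))

theorem ringNorm_isModuleNorm (hv : IsRingNorm v) : IsModuleNorm v v where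
  nonneg := hv.nonneg
  eq_zero_iff := hv.eq_zero_iff
  map_neg := hv.map_neg
  add_le := hv.add_le
  smul_le := fun a b => by simpa [smul_eq_mul] using hv.mul_le a b

/-- multiplicative unit scales the norm exactly -/
theorem smul_eq (hv : IsRingNorm v) (h : IsModuleNorm v nm)
    {ϖ w : A} (hwϖ : w * ϖ = 1) (hϖw : ϖ * w = 1)
    (hmulv : ∀ b, v (ϖ * b) = v ϖ * v b) (ht0 : 0 < v ϖ) :
    (∀ m : M, nm (ϖ • m) = v ϖ * nm m) ∧ (∀ m : M, nm (w • m) = (v ϖ)⁻¹ * nm m) := by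
  have hvw : v w = (v ϖ)⁻¹ := by
    have h1 : v ϖ * v w = 1 := by rw [← hmulv w, hϖw, hv.map_one]
    field_simp
    linarith [h1]
  have key : ∀ m : M, nm (ϖ • m) = v ϖ * nm m := by
    intro m
    refine le_antisymm (h.smul_le _ _) ?_
    have h2 : nm m ≤ (v ϖ)⁻¹ * nm (ϖ • m) := by
      have := h.smul_le w (ϖ • m)
      rwa [smul_smul, hwϖ, one_smul, hvw] at this
    calc v ϖ * nm m ≤ v ϖ * ((v ϖ)⁻¹ * nm (ϖ • m)) := by
          exact mul_le_mul_of_nonneg_left h2 (le_of_lt ht0)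
      _ = nm (ϖ • m) := by field_simp
  refine ⟨key, fun m => ?_⟩
  have := key (w • m)
  rw [smul_smul, hϖw, one_smul] at this
  field_simp
  linarith [this]

theorem smul_pow_eq (h : IsModuleNorm v nm) {c : A} {r : ℝ}
    (hc : ∀ m : M, nm (c • m) = r * nm m) (j : ℕ) (m : M) :
    nm (c ^ j • m) = r ^ j * nm m := by
  induction j generalizing m with
  | zero => simp
  | succ j ih => rw [pow_succ, mul_smul, ih (c • m), hc, pow_succ]; ring

end AutoContAux

namespace AutoContAux

theorem baire_aux {P : Type*} [Ring A] {v : A → ℝ} [AddCommGroup P] [Module A P]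
    {nm : P → ℝ} (h : IsModuleNorm v nm)
    (hc : ∀ s : ℕ → P, NormCauchy nm s → ∃ x : P, NormLim nm s x)
    (D : ℕ → P → Prop)
    (hclosed : ∀ k p, (∀ ε : ℝ, 0 < ε → ∃ q, D k q ∧ nm (p - q) < ε) → D k p)
    (hcover : ∀ p, ∃ k, D k p) :
    ∃ (k : ℕ) (p₀ : P) (ρ : ℝ), 0 < ρ ∧ ∀ p, nm (p - p₀) < ρ → D k p := by
  by_contra H
  push_neg at H
  -- H : ∀ k p₀ ρ, 0 < ρ → ∃ p, nm (p - p₀) < ρ ∧ ¬ D k p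
  have step : ∀ (k : ℕ) (c : P) (e : ℝ), 0 < e → ∃ (c' : P) (e' : ℝ),
      0 < e' ∧ e' ≤ e / 2 ∧ nm (c' - c) < e / 2 ∧ ∀ r, nm (r - c') < e' → ¬ D k r := by
    intro k c e he
    obtain ⟨p, hp1, hp2⟩ := H k c (e/2) (by positivity)
    have hsep : ∃ ε : ℝ, 0 < ε ∧ ∀ q, D k q → ε ≤ nm (p - q) := by
      by_contra hcon
      push_neg at hcon
      exact hp2 (hclosed k p fun ε hε => hcon ε hε)
    obtain ⟨ε, hε, hsep⟩ := hsep
    refine ⟨p, min ε (e/2), by positivity, min_le_right _ _, hp1, fun r hr hD => ?_⟩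
    have := hsep r hD
    rw [sub_comm' h] at this
    exact absurd this (not_le.mpr (lt_of_lt_of_le hr (min_le_left _ _)))
  choose Q E hE1 hE2 hQ hsep using step
  -- build the sequence
  let F : ℕ → {x : P × ℝ // 0 < x.2} := fun k =>
    Nat.rec (⟨(0, 1), one_pos⟩ : {x : P × ℝ // 0 < x.2})
      (fun k st => ⟨(Q k st.1.1 st.1.2 st.2, E k st.1.1 st.1.2 st.2), hE1 _ _ _ _⟩) k
  let q : ℕ → P := fun k => (F k).1.1
  let e : ℕ → ℝ := fun k => (F k).1.2
  have hepos : ∀ k, 0 < e k := fun k => (F k).2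
  have heq : ∀ k, q (k+1) = Q k (q k) (e k) (F k).2 := fun k => rfl
  have hee : ∀ k, e (k+1) = E k (q k) (e k) (F k).2 := fun k => rfl
  have he2 : ∀ k, e (k+1) ≤ e k / 2 := fun k => by rw [hee]; exact hE2 _ _ _ _
  have hq2 : ∀ k, nm (q (k+1) - q k) < e k / 2 := fun k => by rw [heq]; exact hQ _ _ _ _
  have hsep2 : ∀ k r, nm (r - q (k+1)) < e (k+1) → ¬ D k r := fun k r hr => by
    rw [heq k, hee k] at hr
    exact hsep k (q k) (e k) (F k).2 r hr
  have hemono : ∀ k j, k ≤ j → e j ≤ e k := by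
    intro k j hkj
    induction j with
    | zero => simp_all
    | succ j ih =>
      rcases Nat.lt_or_ge k (j+1) with h1 | h1
      · have := ih (Nat.lt_succ_iff.mp h1)
        nlinarith [he2 j, hepos j]
      · have : k = j + 1 := le_antisymm (by omega) h1
        subst this; rfl
  have hegeom : ∀ k, e k ≤ (1/2) ^ k := by
    intro k
    induction k with
    | zero => simp [e, F]
    | succ k ih =>
      calc e (k+1) ≤ e k / 2 := he2 k
        _ ≤ (1/2)^k / 2 := by linarith
        _ = (1/2)^(k+1) := by ring
  have hchain : ∀ k m, nm (q (k+m) - q k) ≤ e k / 2 := by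
    intro k m
    induction m with
    | zero => simp [map_zero' h, le_of_lt (half_pos (hepos k))]
    | succ m ih =>
      have h1 := sub_le' h (q (k+m+1)) (q (k+m)) (q k)
      refine le_trans h1 (max_le ?_ ih)
      have := hq2 (k+m)
      have := hemono k (k+m) (Nat.le_add_right _ _)
      linarith
  have hcauchy : NormCauchy nm q := by
    intro ε hε
    obtain ⟨N, hN⟩ := exists_pow_lt_of_lt_one hε (by norm_num : (1:ℝ)/2 < 1)
    refine ⟨N, fun i j hi hj => ?_⟩
    have h1 := sub_le' h (q i) (q N) (q j)
    have h2 : nm (q i - q N) ≤ e N / 2 := by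
      obtain ⟨m, rfl⟩ := Nat.exists_eq_add_of_le hi
      exact hchain N m
    have h3 : nm (q N - q j) ≤ e N / 2 := by
      rw [sub_comm' h]
      obtain ⟨m, rfl⟩ := Nat.exists_eq_add_of_le hj
      exact hchain N m
    have h4 := hegeom N
    have := max_le h2 h3
    calc nm (q i - q j) ≤ e N / 2 := le_trans h1 this
      _ < ε := by nlinarith [hepos N]
  obtain ⟨x, hx⟩ := hc q hcauchy
  obtain ⟨k, hk⟩ := hcover x
  refine hsep2 k x ?_ hk
  -- nm (x - q (k+1)) < e (k+1)
  obtain ⟨N, hN⟩ := hx (e (k+1) / 2) (half_pos (hepos (k+1)))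
  have h1 : nm (q (max N (k+1)) - x) < e (k+1) / 2 := hN _ (le_max_left _ _)
  have h2 : nm (q (max N (k+1)) - q (k+1)) ≤ e (k+1) / 2 := by
    obtain ⟨m, hm⟩ := Nat.exists_eq_add_of_le (le_max_right N (k+1))
    rw [hm]
    exact hchain (k+1) m
  have h3 := sub_le' h x (q (max N (k+1))) (q (k+1))
  rw [sub_comm' h x (q (max N (k+1)))] at h3
  have := max_le (le_of_lt h1) h2
  calc nm (x - q (k+1)) ≤ e (k+1) / 2 := le_trans h3 this
    _ < e (k+1) := by linarith [hepos (k+1)]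

end AutoContAux

/-- Over a Banach–Tate ring, every `A`-linear map from a finite
Banach `A`-module to a Banach `A`-module is automatically continuous. -/
theorem linearMap_from_finite_banach_continuous
    {A : Type u} [Ring A] (v : A → ℝ) (hA : IsBanachTate v)
    {M : Type v} [AddCommGroup M] [Module A M] (nmM : M → ℝ)
    (hM : IsModuleNorm v nmM) (hMc : NormComplete nmM)
    {P : Type w} [AddCommGroup P] [Module A P] (nmP : P → ℝ)
    (hP : IsModuleNorm v nmP) (hPc : NormComplete nmP)
    (hPfin : Module.Finite A P)
    (φ : P →ₗ[A] M) :
    NormContinuous nmP nmM φ := by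
  classical
  open AutoContAux in
  obtain ⟨ϖ, hϖu, ht1, hϖmul⟩ := hA.exists_unit
  have hv := hA.isRingNorm
  obtain ⟨U, hU⟩ := hϖu
  set w : A := ↑U⁻¹ with hwdef
  have hwϖ : w * ϖ = 1 := by rw [← hU]; exact U.inv_mul
  have hϖw : ϖ * w = 1 := by rw [← hU]; exact U.mul_inv
  set t := v ϖ with htdef
  have ht0 : 0 < t := by
    by_contra hc
    push_neg at hc
    have h0 : t = 0 := le_antisymm hc (hv.nonneg ϖ)
    have h1 : v (ϖ * w) = t * v w := hϖmul w
    rw [hϖw, hv.map_one, h0, zero_mul] at h1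
    norm_num at h1
  set s : ℝ := t⁻¹ with hsdef
  have hs0 : 0 < s := inv_pos.mpr ht0
  have hs1 : 1 < s := (one_lt_inv₀ ht0).mpr ht1
  have hst : t * s = 1 := mul_inv_cancel₀ (ne_of_gt ht0)
  obtain ⟨hPsmul, hPsmulw⟩ := AutoContAux.smul_eq hv hP hwϖ hϖw hϖmul ht0
  obtain ⟨hMsmul, hMsmulw⟩ := AutoContAux.smul_eq hv hM hwϖ hϖw hϖmul ht0
  obtain ⟨hAsmul, hAsmulw⟩ :=
    AutoContAux.smul_eq hv (AutoContAux.ringNorm_isModuleNorm hv) hwϖ hϖw hϖmul ht0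
  -- power versions
  have hPpow : ∀ (j : ℕ) (p : P), nmP (ϖ ^ j • p) = t ^ j * nmP p :=
    fun j p => AutoContAux.smul_pow_eq hP hPsmul j p
  have hPpoww : ∀ (j : ℕ) (p : P), nmP (w ^ j • p) = s ^ j * nmP p :=
    fun j p => AutoContAux.smul_pow_eq hP hPsmulw j p
  have hApow : ∀ (j : ℕ) (a : A), v (ϖ ^ j * a) = t ^ j * v a := by
    intro j a
    have := AutoContAux.smul_pow_eq (AutoContAux.ringNorm_isModuleNorm hv) hAsmul j a
    rwa [smul_eq_mul] at this
  have hcomm : Commute ϖ w := by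
    show ϖ * w = w * ϖ
    rw [hϖw, hwϖ]
  have hϖwpow : ∀ j : ℕ, ϖ ^ j * w ^ j = 1 := by
    intro j
    rw [← hcomm.mul_pow, hϖw, one_pow]
  have hwϖpow : ∀ j : ℕ, w ^ j * ϖ ^ j = 1 := by
    intro j
    rw [← hcomm.symm.mul_pow, hwϖ, one_pow]
  -- generators
  obtain ⟨n, x, hx⟩ := Module.Finite.exists_fin (R := A) (M := P)
  set π : (Fin n → A) → P := fun a => ∑ i, a i • x i with hπdef
  have hsurj : ∀ p : P, ∃ a, π a = p := by
    intro p
    have hmem : p ∈ Submodule.span A (Set.range x) := hx ▸ Submodule.mem_top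
    exact (Submodule.mem_span_range_iff_exists_fun A).mp hmem
  have hπsub : ∀ a b, π (a - b) = π a - π b := by
    intro a b
    simp only [hπdef, Pi.sub_apply, sub_smul, Finset.sum_sub_distrib]
  have hπsmul : ∀ (c : A) (a), π (fun i => c * a i) = c • π a := by
    intro c a
    simp only [hπdef, Finset.smul_sum, mul_smul]
  -- the "closure of image of ball" sets
  set D : ℕ → P → Prop := fun k p => ∀ ε : ℝ, 0 < ε →
    ∃ a : Fin n → A, (∀ i, v (a i) ≤ s ^ k) ∧ nmP (p - π a) < ε with hDdef
  have hclosed : ∀ k p, (∀ ε : ℝ, 0 < ε → ∃ q, D k q ∧ nmP (p - q) < ε) → D k p := by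
    intro k p hap ε hε
    obtain ⟨q, hq, hpq⟩ := hap ε hε
    obtain ⟨a, ha, hqa⟩ := hq ε hε
    refine ⟨a, ha, ?_⟩
    exact lt_of_le_of_lt (AutoContAux.sub_le' hP p q (π a)) (max_lt hpq hqa)
  have hcover : ∀ p : P, ∃ k, D k p := by
    intro p
    obtain ⟨a, ha⟩ := hsurj p
    have : ∀ i, ∃ k : ℕ, v (a i) ≤ s ^ k := by
      intro i
      obtain ⟨k, hk⟩ := pow_unbounded_of_one_lt (v (a i)) hs1
      exact ⟨k, le_of_lt hk⟩
    choose K hK using this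
    refine ⟨Finset.univ.sup K, fun ε hε => ⟨a, fun i => ?_, by
      rw [ha]; simpa [AutoContAux.map_zero' hP] using hε⟩⟩
    exact le_trans (hK i) (pow_le_pow_right₀ (le_of_lt hs1) (Finset.le_sup (Finset.mem_univ i)))
  obtain ⟨k, p₀, ρ, hρ, hball⟩ := AutoContAux.baire_aux hP hPc D hclosed hcover
  -- translate the ball to the origin
  have hzero : ∀ p, nmP p < ρ → D k p := by
    intro p hp ε hε
    have h1 : D k (p₀ + p) := hball _ (by simpa using hp)
    have h2 : D k p₀ := hball _ (by simpa [AutoContAux.map_zero' hP] using hρ)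
    obtain ⟨a, ha, ha2⟩ := h1 ε hε
    obtain ⟨b, hb, hb2⟩ := h2 ε hε
    refine ⟨a - b, fun i => ?_, ?_⟩
    · have h3 : v (a i - b i) ≤ max (v (a i)) (v (b i)) := by
        have h4 := hv.add_le (a i) (-(b i))
        rwa [← sub_eq_add_neg, hv.map_neg] at h4
      exact le_trans h3 (max_le (ha i) (hb i))
    · have heq2 : p - π (a - b) = (p₀ + p - π a) - (p₀ - π b) := by
        rw [hπsub]; abel
      rw [heq2]
      calc nmP ((p₀ + p - π a) - (p₀ - π b))
          ≤ max (nmP (p₀ + p - π a)) (nmP (p₀ - π b)) := by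
            have h5 := hP.add_le (p₀ + p - π a) (-(p₀ - π b))
            rwa [← sub_eq_add_neg, hP.map_neg] at h5
        _ < ε := max_lt ha2 hb2
  -- scaled version
  have hscaled : ∀ (j : ℕ) (p : P), nmP p < t ^ j * ρ → ∀ ε : ℝ, 0 < ε →
      ∃ a : Fin n → A, (∀ i, v (a i) ≤ t ^ j * s ^ k) ∧ nmP (p - π a) < ε := by
    intro j p hp ε hε
    have hsj : (0:ℝ) < s ^ j := pow_pos hs0 j
    have hts : t ^ j * s ^ j = 1 := by rw [← mul_pow, hst, one_pow]
    have h1 : nmP (w ^ j • p) < ρ := by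
      rw [hPpoww]
      calc s ^ j * nmP p < s ^ j * (t ^ j * ρ) := mul_lt_mul_of_pos_left hp hsj
        _ = ρ := by rw [← mul_assoc, mul_comm (s ^ j), hts, one_mul]
    obtain ⟨a, ha, ha2⟩ := hzero _ h1 (ε * s ^ j) (by positivity)
    refine ⟨fun i => ϖ ^ j * a i, fun i => ?_, ?_⟩
    · rw [hApow]
      exact mul_le_mul_of_nonneg_left (ha i) (le_of_lt (pow_pos ht0 j))
    · have hpe : p - π (fun i => ϖ ^ j * a i) = ϖ ^ j • (w ^ j • p - π a) := by
        rw [smul_sub, smul_smul, hϖwpow, one_smul, hπsmul]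
      rw [hpe, hPpow]
      calc t ^ j * nmP (w ^ j • p - π a) < t ^ j * (ε * s ^ j) :=
            mul_lt_mul_of_pos_left ha2 (pow_pos ht0 j)
        _ = ε := by rw [mul_comm ε, ← mul_assoc, hts, one_mul]
  -- remove the closure, using completeness of A
  have hopen : ∀ (j : ℕ) (p : P), nmP p < t ^ j * ρ →
      ∃ a : Fin n → A, π a = p ∧ ∀ i, v (a i) ≤ t ^ j * s ^ k := by
    intro j p hp
    have hCb : (0:ℝ) < t ^ j * s ^ k := by positivity
    have hstep : ∀ (m : ℕ) (q : P), nmP q < t ^ (j + m) * ρ →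
        ∃ a, (∀ i, v (a i) ≤ t ^ (j + m) * s ^ k) ∧ nmP (q - π a) < t ^ (j + m + 1) * ρ :=
      fun m q hq => hscaled (j + m) q hq (t ^ (j + m + 1) * ρ) (by positivity)
    choose aa haa1 haa2 using hstep
    let rem : ∀ m : ℕ, {q : P // nmP q < t ^ (j + m) * ρ} := fun m =>
      Nat.rec (motive := fun m => {q : P // nmP q < t ^ (j + m) * ρ})
        ⟨p, by simpa using hp⟩
        (fun m st => ⟨st.1 - π (aa m st.1 st.2), haa2 m st.1 st.2⟩) m
    let b : ℕ → Fin n → A := fun m => aa m (rem m).1 (rem m).2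
    have hrem : ∀ m, (rem (m+1)).1 = (rem m).1 - π (b m) := fun m => rfl
    have hb : ∀ m i, v (b m i) ≤ t ^ (j + m) * s ^ k := fun m => haa1 m _ _
    have hrm : ∀ m, (rem m).1 = p - ∑ m' ∈ Finset.range m, π (b m') := by
      intro m
      induction m with
      | zero => simp [rem]
      | succ m ih => rw [hrem, ih, Finset.sum_range_succ]; abel
    set S : ℕ → Fin n → A := fun m i => ∑ m' ∈ Finset.range m, b m' i with hSdef
    have hπS : ∀ m, π (S m) = ∑ m' ∈ Finset.range m, π (b m') := by
      intro m
      simp only [hπdef, hSdef, Finset.sum_smul]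
      exact Finset.sum_comm
    have hSdiff : ∀ (i : Fin n) (m1 m2 : ℕ), m2 ≤ m1 →
        v (S m1 i - S m2 i) ≤ t ^ m2 * (t ^ j * s ^ k) := by
      intro i m1 m2 hm
      have heq3 : S m1 i - S m2 i = ∑ m' ∈ Finset.Ico m2 m1, b m' i :=
        (Finset.sum_Ico_eq_sub _ hm).symm
      rw [heq3]
      refine AutoContAux.finsetSum_le (AutoContAux.ringNorm_isModuleNorm hv) _ _ _
        (by positivity) ?_
      intro m' hm'
      obtain ⟨hm2, _⟩ := Finset.mem_Ico.mp hm'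
      have h5 : t ^ m' ≤ t ^ m2 :=
        pow_le_pow_of_le_one (le_of_lt ht0) (le_of_lt ht1) hm2
      calc v (b m' i) ≤ t ^ (j + m') * s ^ k := hb m' i
        _ ≤ t ^ m2 * (t ^ j * s ^ k) := by
          rw [pow_add]
          have h6 : (0:ℝ) < t ^ j := pow_pos ht0 j
          have h7 : (0:ℝ) < s ^ k := pow_pos hs0 k
          calc t ^ j * t ^ m' * s ^ k ≤ t ^ j * t ^ m2 * s ^ k := by nlinarith
            _ = t ^ m2 * (t ^ j * s ^ k) := by ring
    have hCauchyS : ∀ i, NormCauchy v (fun m => S m i) := by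
      intro i ε hε
      obtain ⟨N, hN⟩ := exists_pow_lt_of_lt_one
        (show (0:ℝ) < ε / (t ^ j * s ^ k) by positivity) ht1
      have hNe : t ^ N * (t ^ j * s ^ k) < ε := by
        rw [← div_mul_cancel₀ ε (ne_of_gt hCb)]
        exact mul_lt_mul_of_pos_right hN hCb
      refine ⟨N, fun m1 m2 h1 h2 => ?_⟩
      have key : ∀ m1 m2 : ℕ, N ≤ m2 → m2 ≤ m1 → v (S m1 i - S m2 i) < ε := by
        intro m1 m2 hN2 hm
        have h3 := hSdiff i m1 m2 hm
        have h4 : t ^ m2 ≤ t ^ N :=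
          pow_le_pow_of_le_one (le_of_lt ht0) (le_of_lt ht1) hN2
        calc v (S m1 i - S m2 i) ≤ t ^ m2 * (t ^ j * s ^ k) := h3
          _ ≤ t ^ N * (t ^ j * s ^ k) := by nlinarith
          _ < ε := hNe
      rcases le_total m2 m1 with hm | hm
      · exact key m1 m2 h2 hm
      · rw [← neg_sub (S m2 i) (S m1 i), hv.map_neg]
        exact key m2 m1 h1 hm
    have hLim : ∀ i, ∃ L : A, NormLim v (fun m => S m i) L :=
      fun i => hA.complete _ (hCauchyS i)
    choose L hL using hLim
    have hLbound : ∀ i, v (L i) ≤ t ^ j * s ^ k := by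
      intro i
      refine le_of_forall_pos_le_add ?_
      intro ε hε
      obtain ⟨N, hN⟩ := hL i ε hε
      have h1 := hN N (le_refl N)
      have h2 : v (L i) ≤ max (v (L i - S N i)) (v (S N i)) := by
        have h4 := hv.add_le (L i - S N i) (S N i)
        rwa [sub_add_cancel] at h4
      have h2' : v (L i - S N i) = v (S N i - L i) := by rw [← hv.map_neg, neg_sub]
      have h3 : v (S N i) ≤ t ^ j * s ^ k := by
        have h5 := hSdiff i N 0 (Nat.zero_le N)
        simpa [hSdef] using h5
      have h6 : (0:ℝ) < t ^ j * s ^ k := hCb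
      rw [h2'] at h2
      calc v (L i) ≤ max (v (S N i - L i)) (v (S N i)) := h2
        _ ≤ t ^ j * s ^ k + ε := max_le (by linarith) (by linarith)
    refine ⟨L, ?_, hLbound⟩
    have hzero' : p - π L = 0 := by
      refine AutoContAux.eq_of_forall_lt hP ?_
      intro ε hε
      have hXnn : (0:ℝ) ≤ ∑ i, nmP (x i) := Finset.sum_nonneg fun i _ => hP.nonneg _
      set X : ℝ := 1 + ∑ i, nmP (x i) with hXdef
      have hX0 : 0 < X := by linarith
      have hXi : ∀ i, nmP (x i) ≤ X := by
        intro i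
        have := Finset.single_le_sum (f := fun i => nmP (x i))
          (fun i _ => hP.nonneg _) (Finset.mem_univ i)
        linarith
      have hρj : (0:ℝ) < t ^ j * ρ := by positivity
      obtain ⟨N1, hN1⟩ := exists_pow_lt_of_lt_one
        (show (0:ℝ) < ε / (t ^ j * ρ) by positivity) ht1
      have hN1e : t ^ N1 * (t ^ j * ρ) < ε := by
        rw [← div_mul_cancel₀ ε (ne_of_gt hρj)]
        exact mul_lt_mul_of_pos_right hN1 hρj
      have hεX : (0:ℝ) < ε / (2 * X) := by positivity
      choose N2 hN2 using fun i => hL i (ε / (2 * X)) hεX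
      set m0 : ℕ := max N1 (Finset.univ.sup N2) with hm0def
      -- first part
      have hfirst : nmP (p - π (S m0)) < ε := by
        have h7 : p - π (S m0) = (rem m0).1 := by rw [hrm, hπS]
        rw [h7]
        have h8 := (rem m0).2
        have h9 : t ^ (j + m0) * ρ ≤ t ^ N1 * (t ^ j * ρ) := by
          rw [pow_add]
          have h10 : t ^ m0 ≤ t ^ N1 :=
            pow_le_pow_of_le_one (le_of_lt ht0) (le_of_lt ht1) (le_max_left _ _)
          have h11 : (0:ℝ) < t ^ j := pow_pos ht0 j
          nlinarith
        linarith
      have hsecond : nmP (π (S m0) - π L) ≤ ε / 2 := by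
        have h12 : π (S m0) - π L = ∑ i, (S m0 i - L i) • x i := by
          rw [← hπsub]
          simp only [hπdef, Pi.sub_apply]
        rw [h12]
        refine AutoContAux.finsetSum_le hP _ _ _ (by positivity) ?_
        intro i _
        have h13 : v (S m0 i - L i) ≤ ε / (2 * X) := by
          refine le_of_lt (hN2 i m0 ?_)
          exact le_trans (Finset.le_sup (Finset.mem_univ i)) (le_max_right _ _)
        calc nmP ((S m0 i - L i) • x i) ≤ v (S m0 i - L i) * nmP (x i) := hP.smul_le _ _
          _ ≤ (ε / (2 * X)) * X :=
            mul_le_mul h13 (hXi i) (hP.nonneg _) (le_of_lt hεX)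
          _ = ε / 2 := by field_simp
      have h14 := AutoContAux.sub_le' hP p (π (S m0)) (π L)
      have h15 : ε / 2 < ε := by linarith
      exact lt_of_le_of_lt h14 (max_lt hfirst (lt_of_le_of_lt hsecond h15))
    exact (sub_eq_zero.mp hzero').symm
  -- conclude continuity
  intro m ε hε
  have hEnn : (0:ℝ) ≤ ∑ i, nmM (φ (x i)) := Finset.sum_nonneg fun i _ => hM.nonneg _
  set E : ℝ := 1 + ∑ i, nmM (φ (x i)) with hEdef
  have hE0 : 0 < E := by linarith
  have hEi : ∀ i, nmM (φ (x i)) ≤ E := by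
    intro i
    have := Finset.single_le_sum (f := fun i => nmM (φ (x i)))
      (fun i _ => hM.nonneg _) (Finset.mem_univ i)
    linarith
  have hskE : (0:ℝ) < s ^ k * E := by positivity
  obtain ⟨j, hj⟩ := exists_pow_lt_of_lt_one
    (show (0:ℝ) < ε / (s ^ k * E) by positivity) ht1
  have hje : t ^ j * (s ^ k * E) < ε := by
    rw [← div_mul_cancel₀ ε (ne_of_gt hskE)]
    exact mul_lt_mul_of_pos_right hj hskE
  refine ⟨t ^ j * ρ, by positivity, fun p' hp' => ?_⟩
  obtain ⟨a, ha, hab⟩ := hopen j (p' - m) hp'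
  have hφ : φ p' - φ m = ∑ i, a i • φ (x i) := by
    rw [← map_sub, ← ha]
    simp only [hπdef, map_sum, map_smul]
  rw [hφ]
  have hbound : nmM (∑ i, a i • φ (x i)) ≤ t ^ j * s ^ k * E := by
    refine AutoContAux.finsetSum_le hM _ _ _ (by positivity) ?_
    intro i _
    calc nmM (a i • φ (x i)) ≤ v (a i) * nmM (φ (x i)) := hM.smul_le _ _
      _ ≤ (t ^ j * s ^ k) * E := mul_le_mul (hab i) (hEi i) (hM.nonneg _) (by positivity)
  calc nmM (∑ i, a i • φ (x i)) ≤ t ^ j * s ^ k * E := hbound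
    _ < ε := by rw [mul_assoc]; exact hje
end

section
/- Let A be a noetherian Banach–Tate ring. Then: (i) every finitely generated A-module admits a norm making it a Banach A-module, and any two such norms are equivalent (induce the same topology); (ii) for any finite Banach A-modules M and N, every A-linear map f:M→N is continuous, the image f(M) is closed in N, and the induced surjection M→f(M) is an open map. -/
open scoped Classical
open scoped NNReal

universe u v w

/-- Two norms on a module are equivalent if they induce the same topology, i.e. the
identity map is continuous in both directions. -/
def NormEquiv {M : Type*} [AddCommGroup M] (nm nm' : M → ℝ) : Prop :=
  NormContinuous nm nm' id ∧ NormContinuous nm' nm id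

/-- A subset is closed for the norm topology (sequential characterization, which is
equivalent for metric topologies). -/
def NormClosed {M : Type*} [AddCommGroup M] (nm : M → ℝ) (S : Set M) : Prop :=
  ∀ (s : ℕ → M) (x : M), (∀ n, s n ∈ S) → NormLim nm s x → x ∈ S

/-- A subset is open for the norm topology. -/
def NormOpenSet {M : Type*} [AddCommGroup M] (nm : M → ℝ) (S : Set M) : Prop :=
  ∀ x ∈ S, ∃ ε : ℝ, 0 < ε ∧ ∀ y, nm (y - x) < ε → y ∈ S

/-- A subset `S` is open in the subspace `R` of `N` (for the norm topology). -/
def NormOpenIn {N : Type*} [AddCommGroup N] (nm : N → ℝ) (R S : Set N) : Prop :=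
  ∀ x ∈ S, ∃ ε : ℝ, 0 < ε ∧ ∀ y ∈ R, nm (y - x) < ε → y ∈ S


/-! ### Auxiliary development -/

section Aux

variable {A : Type*} [Ring A] {v : A → ℝ}
variable {M : Type*} [AddCommGroup M] [Module A M] {nm : M → ℝ}

namespace IsModuleNorm

theorem map_zero (h : IsModuleNorm v nm) : nm 0 = 0 := (h.eq_zero_iff 0).mpr rfl

theorem sub_le (h : IsModuleNorm v nm) (m n : M) :
    nm (m - n) ≤ max (nm m) (nm n) := by
  rw [sub_eq_add_neg]
  simpa [h.map_neg] using h.add_le m (-n)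

theorem sub_comm (h : IsModuleNorm v nm) (m n : M) : nm (m - n) = nm (n - m) := by
  rw [← h.map_neg (m - n), neg_sub]

/-- ultrametric triangle for three points -/
theorem tri (h : IsModuleNorm v nm) (x y z : M) :
    nm (x - z) ≤ max (nm (x - y)) (nm (y - z)) := by
  have : x - z = (x - y) + (y - z) := by abel
  rw [this]; exact h.add_le _ _

theorem sum_le (h : IsModuleNorm v nm) {ι : Type*} (s : Finset ι) (f : ι → M) {r : ℝ}
    (hr : 0 ≤ r) (hf : ∀ i ∈ s, nm (f i) ≤ r) : nm (∑ i ∈ s, f i) ≤ r := by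
  classical
  induction s using Finset.induction_on with
  | empty => simpa [h.map_zero] using hr
  | insert a s hni ih =>
      rw [Finset.sum_insert hni]
      refine le_trans (h.add_le _ _) (max_le (hf a (by simp)) (ih fun i hi => hf i (by simp [hi])))

end IsModuleNorm

/-- A ring norm gives a module norm on the ring itself. -/
theorem IsRingNorm.toModuleNorm (h : IsRingNorm v) : IsModuleNorm v v :=
  ⟨h.nonneg, h.eq_zero_iff, h.map_neg, h.add_le, fun a m => h.mul_le a m⟩

theorem NormLim.add (h : IsModuleNorm v nm) {s t : ℕ → M} {x y : M}
    (hs : NormLim nm s x) (ht : NormLim nm t y) : NormLim nm (fun n => s n + t n) (x + y) := by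
  intro ε hε
  obtain ⟨N₁, h₁⟩ := hs ε hε
  obtain ⟨N₂, h₂⟩ := ht ε hε
  refine ⟨max N₁ N₂, fun i hi => ?_⟩
  have : s i + t i - (x + y) = (s i - x) + (t i - y) := by abel
  rw [this]
  exact lt_of_le_of_lt (h.add_le _ _)
    (max_lt (h₁ i (le_trans (le_max_left _ _) hi)) (h₂ i (le_trans (le_max_right _ _) hi)))

theorem NormLim.smul (h : IsModuleNorm v nm) (hv : IsRingNorm v) {s : ℕ → M} {x : M}
    (hs : NormLim nm s x) (a : A) : NormLim nm (fun n => a • s n) (a • x) := by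
  intro ε hε
  have hva : 0 < v a + 1 := lt_of_le_of_lt (hv.nonneg a) (by linarith)
  obtain ⟨N, hN⟩ := hs (ε / (v a + 1)) (by positivity)
  refine ⟨N, fun i hi => ?_⟩
  have : a • s i - a • x = a • (s i - x) := by rw [smul_sub]
  rw [this]
  calc nm (a • (s i - x)) ≤ v a * nm (s i - x) := h.smul_le _ _
    _ ≤ (v a + 1) * nm (s i - x) := by
        have := h.nonneg (s i - x); nlinarith [hv.nonneg a]
    _ < (v a + 1) * (ε / (v a + 1)) := by
        have := hN i hi
        exact mul_lt_mul_of_pos_left this hva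
    _ = ε := by field_simp

/-- in an ultrametric setting, the norm of a limit is at most any eventual bound -/
theorem NormLim.norm_le (h : IsModuleNorm v nm) {s : ℕ → M} {x : M}
    (hs : NormLim nm s x) {r : ℝ} (hr : ∀ n, nm (s n) ≤ r) : nm x ≤ r := by
  have hr0 : 0 ≤ r := le_trans (h.nonneg (s 0)) (hr 0)
  by_contra hc
  push_neg at hc
  obtain ⟨N, hN⟩ := hs (nm x - r) (by linarith)
  have h1 := hN N le_rfl
  have h2 := h.tri x (s N) 0
  simp only [sub_zero] at h2
  rw [h.sub_comm x (s N)] at h2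
  have h3 : nm (s N - x) < nm x := by linarith
  have h4 : nm (s N) < nm x := lt_of_le_of_lt (hr N) hc
  have := lt_of_le_of_lt h2 (max_lt h3 h4)
  exact lt_irrefl _ this

theorem normLim_unique (h : IsModuleNorm v nm) {s : ℕ → M} {x y : M}
    (hx : NormLim nm s x) (hy : NormLim nm s y) : x = y := by
  have : ∀ ε : ℝ, 0 < ε → nm (x - y) < ε := by
    intro ε hε
    obtain ⟨N₁, h₁⟩ := hx ε hε
    obtain ⟨N₂, h₂⟩ := hy ε hε
    have := h.tri x (s (max N₁ N₂)) y
    rw [h.sub_comm x (s (max N₁ N₂))] at this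
    exact lt_of_le_of_lt this (max_lt (h₁ _ (le_max_left _ _)) (h₂ _ (le_max_right _ _)))
  have h0 : nm (x - y) = 0 := by
    by_contra hc
    have hpos : 0 < nm (x - y) := lt_of_le_of_ne (h.nonneg _) (Ne.symm hc)
    exact lt_irrefl _ (this _ hpos)
  exact sub_eq_zero.mp ((h.eq_zero_iff _).mp h0)

end Aux

section Topo

variable {A : Type*} [Ring A] {v : A → ℝ}
variable {M : Type*} [AddCommGroup M] [Module A M] {nm : M → ℝ}

/-- sequential closure -/
def nseqClosure (nm : M → ℝ) (S : Set M) : Set M :=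
  {x | ∃ s : ℕ → M, (∀ n, s n ∈ S) ∧ NormLim nm s x}

theorem subset_nseqClosure (h : IsModuleNorm v nm) (S : Set M) : S ⊆ nseqClosure nm S := by
  intro x hx
  exact ⟨fun _ => x, fun _ => hx, fun ε hε => ⟨0, fun i _ => by simpa [h.map_zero] using hε⟩⟩

theorem nseqClosure_closed (h : IsModuleNorm v nm) (S : Set M) :
    NormClosed nm (nseqClosure nm S) := by
  intro s x hs hlim
  -- diagonal argument
  have choice : ∀ n : ℕ, ∃ t : M, t ∈ S ∧ nm (t - s n) < 1 / (n + 1 : ℝ) := by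
    intro n
    obtain ⟨u, hu, hul⟩ := hs n
    obtain ⟨N, hN⟩ := hul (1 / (n + 1 : ℝ)) (by positivity)
    exact ⟨u N, hu N, hN N le_rfl⟩
  choose t ht htn using choice
  refine ⟨t, ht, ?_⟩
  intro ε hε
  obtain ⟨N₁, hN₁⟩ := hlim ε hε
  obtain ⟨N₂, hN₂⟩ := exists_nat_one_div_lt hε
  refine ⟨max N₁ N₂, fun i hi => ?_⟩
  have h1 : nm (t i - s i) < ε := by
    refine lt_of_lt_of_le (htn i) ?_
    refine le_trans ?_ hN₂.le
    have : (N₂ : ℝ) + 1 ≤ (i : ℝ) + 1 := by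
      have : (N₂ : ℝ) ≤ i := Nat.cast_le.mpr (le_trans (le_max_right _ _) hi)
      linarith
    apply one_div_le_one_div_of_le <;> [positivity; exact this]
  exact lt_of_le_of_lt (h.tri (t i) (s i) x) (max_lt h1 (hN₁ i (le_trans (le_max_left _ _) hi)))

/-- the complement of a sequentially closed set is "open" -/
theorem NormClosed.compl_ball (h : IsModuleNorm v nm) {S : Set M} (hS : NormClosed nm S)
    {y : M} (hy : y ∉ S) : ∃ ρ : ℝ, 0 < ρ ∧ ∀ z, nm (z - y) < ρ → z ∉ S := by
  by_contra hc
  push_neg at hc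
  have choice : ∀ n : ℕ, ∃ z : M, nm (z - y) < 1 / (n + 1 : ℝ) ∧ z ∈ S := by
    intro n
    obtain ⟨z, hz1, hz2⟩ := hc (1 / (n + 1 : ℝ)) (by positivity)
    exact ⟨z, hz1, hz2⟩
  choose z hz1 hz2 using choice
  refine hy (hS z y hz2 ?_)
  intro ε hε
  obtain ⟨N, hN⟩ := exists_nat_one_div_lt hε
  refine ⟨N, fun i hi => ?_⟩
  refine lt_of_lt_of_le (lt_of_lt_of_le (hz1 i) ?_) hN.le
  have : (N : ℝ) + 1 ≤ (i : ℝ) + 1 := by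
    have : (N : ℝ) ≤ i := Nat.cast_le.mpr hi
    linarith
  apply one_div_le_one_div_of_le <;> [positivity; exact this]

/-- Cauchy sequence with a convergent "tail-selection" converges -/
theorem normCauchy_lim_of_subseq (h : IsModuleNorm v nm) {s : ℕ → M} (hs : NormCauchy nm s)
    {φ : ℕ → ℕ} (hφ : ∀ k, k ≤ φ k) {x : M} (hx : NormLim nm (s ∘ φ) x) :
    NormLim nm s x := by
  intro ε hε
  obtain ⟨N₁, h₁⟩ := hs ε hε
  obtain ⟨N₂, h₂⟩ := hx ε hε
  refine ⟨max N₁ N₂, fun i hi => ?_⟩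
  set K := max N₁ N₂
  have hK1 : N₁ ≤ φ K := le_trans (le_trans (le_max_left _ _) (le_refl K)) (hφ K)
  refine lt_of_le_of_lt (h.tri (s i) (s (φ K)) x) (max_lt ?_ ?_)
  · exact h₁ i (φ K) (le_trans (le_max_left _ _) hi) hK1
  · exact h₂ K (le_max_right _ _)

/-- **Baire category theorem** for complete norms. -/
theorem norm_baire (h : IsModuleNorm v nm) (hcomp : NormComplete nm)
    (C : ℕ → Set M) (hC : ∀ k, NormClosed nm (C k)) (hU : ∀ x : M, ∃ k, x ∈ C k) :
    ∃ (k : ℕ) (x : M) (ε : ℝ), 0 < ε ∧ ∀ y, nm (y - x) < ε → y ∈ C k := by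
  by_contra hc
  push_neg at hc
  -- key step: shrink a ball to avoid C k
  have key : ∀ (k : ℕ) (p : M × ℝ), ∃ q : M × ℝ, 0 < p.2 →
      (0 < q.2 ∧ q.2 ≤ p.2 / 2 ∧ nm (q.1 - p.1) < p.2 / 2 ∧
        ∀ z, nm (z - q.1) < q.2 → z ∉ C k) := by
    intro k p
    by_cases hp : 0 < p.2
    · obtain ⟨y, hy1, hy2⟩ := hc k p.1 (p.2 / 2) (by linarith)
      obtain ⟨ρ, hρ, hρ2⟩ := (hC k).compl_ball h hy2
      exact ⟨(y, min ρ (p.2 / 2)), fun _ =>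
        ⟨lt_min hρ (by linarith), min_le_right _ _, hy1,
         fun z hz => hρ2 z (lt_of_lt_of_le hz (min_le_left _ _))⟩⟩
    · exact ⟨p, fun hp' => absurd hp' hp⟩
  choose F hF using key
  obtain ⟨g, hg0, hgs⟩ : ∃ g : ℕ → M × ℝ, g 0 = (0, 1) ∧ ∀ k, g (k + 1) = F k (g k) :=
    ⟨fun n => Nat.rec ((0 : M), (1 : ℝ)) (fun k p => F k p) n, rfl, fun _ => rfl⟩
  have hpos : ∀ k, 0 < (g k).2 := by
    intro k
    induction k with
    | zero => rw [hg0]; norm_num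
    | succ k ih => rw [hgs]; exact ((hF k (g k)) ih).1
  have hprop : ∀ k, (g (k+1)).2 ≤ (g k).2 / 2 ∧ nm ((g (k+1)).1 - (g k).1) < (g k).2 / 2 ∧
      ∀ z, nm (z - (g (k+1)).1) < (g (k+1)).2 → z ∉ C k := by
    intro k
    have := hF k (g k) (hpos k)
    rw [hgs k]
    exact ⟨((hF k (g k)) (hpos k)).2.1, ((hF k (g k)) (hpos k)).2.2.1, ((hF k (g k)) (hpos k)).2.2.2⟩
  -- radii shrink geometrically
  have hrad : ∀ k, (g k).2 ≤ (1 / 2) ^ k := by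
    intro k
    induction k with
    | zero => rw [hg0]; norm_num
    | succ k ih =>
        calc (g (k+1)).2 ≤ (g k).2 / 2 := (hprop k).1
          _ ≤ (1/2)^k / 2 := by linarith
          _ = (1/2)^(k+1) := by ring
  have hmono : ∀ j i, j ≤ i → (g i).2 ≤ (g j).2 := by
    intro j i hji
    induction hji with
    | refl => exact le_refl _
    | @step m hle ih =>
        exact le_trans (le_trans (hprop m).1 (by linarith [hpos m])) ih
  -- nested balls: for i ≥ j, nm (x_i - x_j) < ε_j
  have hnest : ∀ j i, j ≤ i → nm ((g i).1 - (g j).1) < (g j).2 := by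
    intro j i hji
    induction i with
    | zero =>
        have : j = 0 := Nat.le_zero.mp hji
        subst this
        simpa [h.map_zero] using hpos 0
    | succ i ih =>
        rcases Nat.lt_or_ge j (i+1) with hlt | hge
        · have hji' : j ≤ i := Nat.lt_succ_iff.mp hlt
          refine lt_of_le_of_lt (h.tri _ (g i).1 _) (max_lt ?_ (ih hji'))
          have h1 := (hprop i).2.1
          have h2 : (g i).2 ≤ (g j).2 := hmono j i hji'
          linarith [hpos i]
        · have : j = i + 1 := le_antisymm hji hge
          subst this
          simpa [h.map_zero] using hpos (i+1)
  -- the centers form a Cauchy sequence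
  have hcauchy : NormCauchy nm (fun k => (g k).1) := by
    intro ε hε
    obtain ⟨N, hN⟩ := exists_pow_lt_of_lt_one hε (show (1:ℝ)/2 < 1 by norm_num)
    refine ⟨N, fun i j hi hj => ?_⟩
    rcases le_total i j with hij | hij
    · rw [h.sub_comm]
      exact lt_of_lt_of_le (hnest i j hij) (le_trans (hrad i) (le_trans (pow_le_pow_of_le_one (by norm_num) (by norm_num) hi) hN.le))
    · exact lt_of_lt_of_le (hnest j i hij) (le_trans (hrad j) (le_trans (pow_le_pow_of_le_one (by norm_num) (by norm_num) hj) hN.le))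
  obtain ⟨x, hx⟩ := hcomp _ hcauchy
  -- x avoids every C k : contradiction
  obtain ⟨k, hk⟩ := hU x
  refine (hprop k).2.2 x ?_ hk
  -- nm (x - x_{k+1}) < ε_{k+1}
  obtain ⟨N, hN⟩ := hx ((g (k+2)).2) (hpos (k+2))
  set i := max N (k+2)
  have h1 : nm ((g i).1 - x) < (g (k+2)).2 := hN i (le_max_left _ _)
  have h2 : nm ((g i).1 - (g (k+1)).1) < (g (k+1)).2 := hnest (k+1) i (le_trans (by omega) (le_max_right _ _))
  have h3 : (g (k+2)).2 ≤ (g (k+1)).2 := le_trans (hprop (k+1)).1 (by linarith [hpos (k+1)])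
  have := h.tri x ((g i).1) ((g (k+1)).1)
  rw [h.sub_comm x ((g i).1)] at this
  exact lt_of_le_of_lt this (max_lt (lt_of_lt_of_le h1 h3) h2)

end Topo

section Pinorm

variable {A : Type*} [Ring A] (v : A → ℝ)

/-- sup norm on finite products -/
noncomputable def pinorm {ι : Type*} [Fintype ι] (x : ι → A) : ℝ :=
  ((Finset.univ.sup fun i => (v (x i)).toNNReal : ℝ≥0) : ℝ)

variable {v}
variable (hv : IsRingNorm v) {ι : Type*} [Fintype ι]

theorem pinorm_nonneg (x : ι → A) : 0 ≤ pinorm v x := NNReal.coe_nonneg _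

include hv

theorem coord_le_pinorm (x : ι → A) (i : ι) : v (x i) ≤ pinorm v x := by
  have h1 : ((v (x i)).toNNReal : ℝ) ≤ pinorm v x :=
    NNReal.coe_le_coe.mpr (Finset.le_sup (f := fun i => (v (x i)).toNNReal) (Finset.mem_univ i))
  rwa [Real.coe_toNNReal _ (hv.nonneg _)] at h1

theorem pinorm_le {x : ι → A} {r : ℝ} (hr : 0 ≤ r) (hx : ∀ i, v (x i) ≤ r) :
    pinorm v x ≤ r := by
  have : (Finset.univ.sup fun i => (v (x i)).toNNReal : ℝ≥0) ≤ r.toNNReal :=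
    Finset.sup_le fun i _ => (Real.toNNReal_le_toNNReal_iff hr).mpr (hx i)
  calc pinorm v x ≤ (r.toNNReal : ℝ) := NNReal.coe_le_coe.mpr this
    _ = r := Real.coe_toNNReal _ hr

theorem pinorm_eq_zero_iff (x : ι → A) : pinorm v x = 0 ↔ x = 0 := by
  constructor
  · intro h0
    funext i
    have := coord_le_pinorm hv x i
    rw [h0] at this
    exact (hv.eq_zero_iff _).mp (le_antisymm this (hv.nonneg _))
  · intro h
    subst h
    refine le_antisymm (pinorm_le hv le_rfl fun i => ?_) (pinorm_nonneg _)
    simp [hv.map_zero]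

theorem pinorm_isModuleNorm : IsModuleNorm v (pinorm v : (ι → A) → ℝ) := by
  refine ⟨pinorm_nonneg, pinorm_eq_zero_iff hv, ?_, ?_, ?_⟩
  · intro x
    refine le_antisymm (pinorm_le hv (pinorm_nonneg _) fun i => ?_)
      (pinorm_le hv (pinorm_nonneg _) fun i => ?_)
    · simpa [hv.map_neg] using coord_le_pinorm hv x i
    · have := coord_le_pinorm hv (-x) i
      simpa [hv.map_neg] using this
  · intro x y
    refine pinorm_le hv (le_max_iff.mpr (Or.inl (pinorm_nonneg _))) fun i => ?_
    exact le_trans (hv.add_le _ _)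
      (max_le_max (coord_le_pinorm hv x i) (coord_le_pinorm hv y i))
  · intro a x
    refine pinorm_le hv (mul_nonneg (hv.nonneg _) (pinorm_nonneg _)) fun i => ?_
    exact le_trans (hv.mul_le _ _)
      (mul_le_mul_of_nonneg_left (coord_le_pinorm hv x i) (hv.nonneg _))

theorem pinorm_complete (hcv : NormComplete v) :
    NormComplete (pinorm v : (ι → A) → ℝ) := by
  intro s hs
  have hcoord : ∀ i : ι, ∃ x : A, NormLim v (fun n => s n i) x := by
    intro i
    refine hcv _ ?_
    intro ε hε
    obtain ⟨N, hN⟩ := hs ε hε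
    exact ⟨N, fun a b ha hb => lt_of_le_of_lt (by simpa using coord_le_pinorm hv (s a - s b) i) (hN a b ha hb)⟩
  choose x hx using hcoord
  refine ⟨x, ?_⟩
  intro ε hε
  have hNi : ∀ i : ι, ∃ N : ℕ, ∀ j, N ≤ j → v (s j i - x i) < ε / 2 := fun i => hx i (ε/2) (by linarith)
  choose Ni hNi using hNi
  classical
  refine ⟨(Finset.univ.sup Ni), fun j hj => ?_⟩
  refine lt_of_le_of_lt (pinorm_le hv (by linarith) fun i => ?_) (show ε/2 < ε by linarith)
  exact (hNi i j (le_trans (Finset.le_sup (f := Ni) (Finset.mem_univ i)) hj)).le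

end Pinorm

section Combo

variable {A : Type*} [Ring A] {v : A → ℝ}
variable {M : Type*} [AddCommGroup M] [Module A M] {nm : M → ℝ}
variable {ι : Type*} [Fintype ι]

/-- linear combination map -/
noncomputable def combo (b : ι → M) : (ι → A) →ₗ[A] M where
  toFun c := ∑ i, c i • b i
  map_add' x y := by simp [add_smul, Finset.sum_add_distrib]
  map_smul' a c := by simp [mul_smul, Finset.smul_sum]

theorem combo_apply (b : ι → M) (c : ι → A) : combo b c = ∑ i, c i • b i := rfl

theorem combo_range (b : ι → M) :
    LinearMap.range (combo b) = Submodule.span A (Set.range b) := by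
  apply le_antisymm
  · rintro _ ⟨c, rfl⟩
    exact Submodule.sum_mem _ fun i _ =>
      Submodule.smul_mem _ _ (Submodule.subset_span ⟨i, rfl⟩)
  · rw [Submodule.span_le]
    rintro _ ⟨i, rfl⟩
    refine ⟨Pi.single i 1, ?_⟩
    classical
    simp [combo_apply, Pi.single_apply, ite_smul]

theorem combo_norm_le (h : IsModuleNorm v nm) (hv : IsRingNorm v) (b : ι → M) {B : ℝ}
    (hB : 0 ≤ B) (hb : ∀ i, nm (b i) ≤ B) (c : ι → A) :
    nm (combo b c) ≤ pinorm v c * B := by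
  refine h.sum_le Finset.univ _ (mul_nonneg (pinorm_nonneg _) hB) fun i _ => ?_
  exact le_trans (h.smul_le _ _)
    (mul_le_mul (coord_le_pinorm hv c i) (hb i) (h.nonneg _) (pinorm_nonneg _))

theorem combo_continuous (h : IsModuleNorm v nm) (hv : IsRingNorm v) (b : ι → M) :
    NormContinuous (pinorm v) nm (combo b) := by
  classical
  set B : ℝ := (Finset.univ.sup fun i => (nm (b i)).toNNReal : ℝ≥0) + 1 with hBdef
  have hB0 : 0 < B := by positivity
  have hb : ∀ i, nm (b i) ≤ B := by
    intro i
    have h1 : ((nm (b i)).toNNReal : ℝ) ≤ ((Finset.univ.sup fun i => (nm (b i)).toNNReal : ℝ≥0) : ℝ) :=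
      NNReal.coe_le_coe.mpr (Finset.le_sup (f := fun i => (nm (b i)).toNNReal) (Finset.mem_univ i))
    rw [Real.coe_toNNReal _ (h.nonneg _)] at h1
    rw [hBdef]; linarith
  intro c ε hε
  refine ⟨ε / B, by positivity, fun c' hc' => ?_⟩
  rw [← map_sub]
  calc nm (combo b (c' - c)) ≤ pinorm v (c' - c) * B := combo_norm_le h hv b hB0.le hb _
    _ < (ε / B) * B := by exact mul_lt_mul_of_pos_right hc' hB0
    _ = ε := by field_simp

end Combo

section Geom

variable {R : Type*} [Ring R] {w : R → ℝ}

theorem ringnorm_pow_le (hw : IsRingNorm w) (e : R) : ∀ k : ℕ, w (e ^ k) ≤ (w e) ^ k := by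
  intro k
  induction k with
  | zero => simp [hw.map_one]
  | succ k ih =>
      rw [pow_succ, pow_succ]
      exact le_trans (hw.mul_le _ _) (mul_le_mul_of_nonneg_right ih (hw.nonneg _) |>.trans
        (le_of_eq rfl))

/-- geometric series: `1 - e` is invertible when `w e < 1` in a complete normed ring -/
theorem geom_unit (hw : IsRingNorm w) (hc : NormComplete w) {e : R} (he : w e < 1) :
    ∃ u : R, u * (1 - e) = 1 ∧ (1 - e) * u = 1 := by
  have hwm : IsModuleNorm w w := hw.toModuleNorm
  have he0 : 0 ≤ w e := hw.nonneg e
  set p : ℕ → R := fun K => ∑ k ∈ Finset.range K, e ^ k with hp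
  have hdiff : ∀ i j, j ≤ i → w (p i - p j) ≤ (w e) ^ j := by
    intro i j hji
    have : p i - p j = ∑ k ∈ Finset.Ico j i, e ^ k := by
      rw [hp]
      rw [← Finset.sum_Ico_eq_sub _ hji]
    rw [this]
    refine hwm.sum_le _ _ (pow_nonneg he0 j) fun k hk => ?_
    have hjk : j ≤ k := (Finset.mem_Ico.mp hk).1
    exact le_trans (ringnorm_pow_le hw e k) (pow_le_pow_of_le_one he0 he.le hjk)
  have hcauchy : NormCauchy w p := by
    intro ε hε
    obtain ⟨N, hN⟩ := exists_pow_lt_of_lt_one hε he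
    refine ⟨N, fun i j hi hj => ?_⟩
    rcases le_total j i with hji | hji
    · exact lt_of_le_of_lt (le_trans (hdiff i j hji)
        (pow_le_pow_of_le_one he0 he.le hj)) hN
    · rw [hwm.sub_comm]
      exact lt_of_le_of_lt (le_trans (hdiff j i hji)
        (pow_le_pow_of_le_one he0 he.le hi)) hN
  obtain ⟨u, hu⟩ := hc p hcauchy
  have hgeom : ∀ K, (1 - e) * p K = 1 - e ^ K ∧ p K * (1 - e) = 1 - e ^ K := by
    intro K
    induction K with
    | zero => simp [hp]
    | succ K ih =>
        have hpsucc : p (K + 1) = p K + e ^ K := by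
          rw [hp]; exact Finset.sum_range_succ _ _
        constructor
        · rw [hpsucc, mul_add, ih.1, sub_mul, one_mul, pow_succ']
          abel
        · rw [hpsucc, add_mul, ih.2, mul_sub, mul_one, pow_succ]
          abel
  have hsmall : ∀ x : R, (∀ ε : ℝ, 0 < ε → w x < ε) → x = 0 := by
    intro x hx
    by_contra hne
    have : 0 < w x := lt_of_le_of_ne (hw.nonneg x) (fun hh => hne ((hw.eq_zero_iff x).mp hh.symm))
    exact lt_irrefl _ (hx _ this)
  have key : ∀ (c : R), (∀ K, w (c * p K - 1) ≤ (w e) ^ K) → c * u = 1 := by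
    intro c hK
    have : c * u - 1 = 0 := by
      refine hsmall _ fun ε hε => ?_
      have hc1 : 0 < w c + 1 := lt_of_le_of_lt (hw.nonneg c) (by linarith)
      obtain ⟨N₁, hN₁⟩ := hu (ε / (w c + 1)) (by positivity)
      obtain ⟨N₂, hN₂⟩ := exists_pow_lt_of_lt_one hε he
      set K := max N₁ N₂
      have h1 : w (c * u - c * p K) ≤ w c * w (u - p K) := by
        rw [← mul_sub]; exact hw.mul_le _ _
      have h2 : w (u - p K) < ε / (w c + 1) := by
        rw [hwm.sub_comm]; exact hN₁ K (le_max_left _ _)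
      have h3 : w (c * u - c * p K) < ε := by
        refine lt_of_le_of_lt h1 ?_
        calc w c * w (u - p K) ≤ (w c + 1) * w (u - p K) := by nlinarith [hw.nonneg (u - p K)]
          _ < (w c + 1) * (ε / (w c + 1)) := mul_lt_mul_of_pos_left h2 hc1
          _ = ε := by field_simp
      have h4 : w (c * p K - 1) < ε :=
        lt_of_le_of_lt (hK K) (lt_of_le_of_lt (pow_le_pow_of_le_one he0 he.le (le_max_right _ _)) hN₂)
      exact lt_of_le_of_lt (hwm.tri _ (c * p K) _) (max_lt h3 h4)
    exact sub_eq_zero.mp this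
  have key' : ∀ (c : R), (∀ K, w (p K * c - 1) ≤ (w e) ^ K) → u * c = 1 := by
    intro c hK
    have : u * c - 1 = 0 := by
      refine hsmall _ fun ε hε => ?_
      have hc1 : 0 < w c + 1 := lt_of_le_of_lt (hw.nonneg c) (by linarith)
      obtain ⟨N₁, hN₁⟩ := hu (ε / (w c + 1)) (by positivity)
      obtain ⟨N₂, hN₂⟩ := exists_pow_lt_of_lt_one hε he
      set K := max N₁ N₂
      have h1 : w (u * c - p K * c) ≤ w (u - p K) * w c := by
        rw [← sub_mul]; exact hw.mul_le _ _
      have h2 : w (u - p K) < ε / (w c + 1) := by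
        rw [hwm.sub_comm]; exact hN₁ K (le_max_left _ _)
      have h3 : w (u * c - p K * c) < ε := by
        refine lt_of_le_of_lt h1 ?_
        calc w (u - p K) * w c ≤ w (u - p K) * (w c + 1) := by nlinarith [hw.nonneg (u - p K)]
          _ = (w c + 1) * w (u - p K) := by ring
          _ < (w c + 1) * (ε / (w c + 1)) := mul_lt_mul_of_pos_left h2 hc1
          _ = ε := by field_simp
      have h4 : w (p K * c - 1) < ε :=
        lt_of_le_of_lt (hK K) (lt_of_le_of_lt (pow_le_pow_of_le_one he0 he.le (le_max_right _ _)) hN₂)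
      exact lt_of_le_of_lt (hwm.tri _ (p K * c) _) (max_lt h3 h4)
    exact sub_eq_zero.mp this
  have hbound : ∀ K, w ((1 - e) * p K - 1) ≤ (w e) ^ K ∧ w (p K * (1 - e) - 1) ≤ (w e) ^ K := by
    intro K
    have h1 : (1 - e ^ K) - 1 = -(e ^ K) := by abel
    constructor
    · rw [(hgeom K).1, h1, hw.map_neg]; exact ringnorm_pow_le hw e K
    · rw [(hgeom K).2, h1, hw.map_neg]; exact ringnorm_pow_le hw e K
  exact ⟨u, key' (1 - e) (fun K => (hbound K).2), key (1 - e) (fun K => (hbound K).1)⟩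

end Geom

section MatrixNorm

variable {A : Type*} [Ring A] {v : A → ℝ}
variable {ι : Type*} [Fintype ι] [DecidableEq ι]

/-- sup norm on matrices -/
noncomputable def mnorm (v : A → ℝ) (X : Matrix ι ι A) : ℝ :=
  pinorm v (fun p : ι × ι => X p.1 p.2)

theorem mnorm_entry_le (hv : IsRingNorm v) (X : Matrix ι ι A) (i j : ι) :
    v (X i j) ≤ mnorm v X := coord_le_pinorm hv (fun p : ι × ι => X p.1 p.2) (i, j)

theorem mnorm_le (hv : IsRingNorm v) {X : Matrix ι ι A} {r : ℝ} (hr : 0 ≤ r)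
    (hX : ∀ i j, v (X i j) ≤ r) : mnorm v X ≤ r :=
  pinorm_le hv hr fun p => hX p.1 p.2

theorem mnorm_isRingNorm (hv : IsRingNorm v) [Nonempty ι] :
    IsRingNorm (mnorm v : Matrix ι ι A → ℝ) := by
  constructor
  · intro X; exact pinorm_nonneg _
  · intro X
    constructor
    · intro h0
      ext i j
      have := mnorm_entry_le hv X i j
      rw [h0] at this
      exact (hv.eq_zero_iff _).mp (le_antisymm this (hv.nonneg _))
    · intro h; subst h
      refine le_antisymm (mnorm_le hv le_rfl fun i j => ?_) (pinorm_nonneg _)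
      simp [hv.map_zero]
  · refine le_antisymm (mnorm_le hv zero_le_one fun i j => ?_) ?_
    · rw [Matrix.one_apply]
      split <;> simp [hv.map_one, hv.map_zero]
    · obtain ⟨i⟩ := ‹Nonempty ι›
      have := mnorm_entry_le hv (1 : Matrix ι ι A) i i
      rwa [Matrix.one_apply_eq, hv.map_one] at this
  · intro X
    refine le_antisymm (mnorm_le hv (pinorm_nonneg _) fun i j => ?_)
      (mnorm_le hv (pinorm_nonneg _) fun i j => ?_)
    · have : (-X) i j = -(X i j) := rfl
      rw [this, hv.map_neg]; exact mnorm_entry_le hv X i j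
    · have : X i j = -((-X) i j) := by simp
      rw [this, hv.map_neg]; exact mnorm_entry_le hv (-X) i j
  · intro X Y
    refine mnorm_le hv (le_max_iff.mpr (Or.inl (pinorm_nonneg _))) fun i j => ?_
    have : (X + Y) i j = X i j + Y i j := rfl
    rw [this]
    exact le_trans (hv.add_le _ _) (max_le_max (mnorm_entry_le hv X i j) (mnorm_entry_le hv Y i j))
  · intro X Y
    refine mnorm_le hv (mul_nonneg (pinorm_nonneg _) (pinorm_nonneg _)) fun i j => ?_
    rw [Matrix.mul_apply]
    refine hv.toModuleNorm.sum_le Finset.univ _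
      (mul_nonneg (pinorm_nonneg _) (pinorm_nonneg _)) fun k _ => ?_
    exact le_trans (hv.mul_le _ _)
      (mul_le_mul (mnorm_entry_le hv X i k) (mnorm_entry_le hv Y k j) (hv.nonneg _) (pinorm_nonneg _))

theorem mnorm_complete (hv : IsRingNorm v) (hcv : NormComplete v) :
    NormComplete (mnorm v : Matrix ι ι A → ℝ) := by
  intro s hs
  obtain ⟨g, hg⟩ := pinorm_complete hv hcv (fun n => fun p : ι × ι => s n p.1 p.2) (by
    intro ε hε
    obtain ⟨N, hN⟩ := hs ε hε
    refine ⟨N, fun a b ha hb => ?_⟩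
    have : (fun p : ι × ι => s a p.1 p.2) - (fun p : ι × ι => s b p.1 p.2)
        = fun p : ι × ι => (s a - s b) p.1 p.2 := rfl
    rw [this]
    exact hN a b ha hb)
  refine ⟨Matrix.of (fun i j => g (i, j)), ?_⟩
  intro ε hε
  obtain ⟨N, hN⟩ := hg ε hε
  refine ⟨N, fun i hi => ?_⟩
  have : (fun p : ι × ι => (s i - Matrix.of (fun i j => g (i, j))) p.1 p.2)
      = (fun p : ι × ι => s i p.1 p.2) - g := rfl
  show pinorm v (fun p : ι × ι => (s i - Matrix.of (fun i j => g (i, j))) p.1 p.2) < ε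
  rw [this]
  exact hN i hi

/-- action of a matrix on a vector of module elements -/
noncomputable def mact {M : Type*} [AddCommGroup M] [Module A M]
    (X : Matrix ι ι A) (m : ι → M) : ι → M := fun i => ∑ j, X i j • m j

variable {M : Type*} [AddCommGroup M] [Module A M]

theorem mact_mul (X Y : Matrix ι ι A) (m : ι → M) :
    mact (X * Y) m = mact X (mact Y m) := by
  funext i
  unfold mact
  simp only [Matrix.mul_apply]
  simp only [Finset.sum_smul, mul_smul, Finset.smul_sum]
  exact Finset.sum_comm

theorem mact_one (m : ι → M) : mact (1 : Matrix ι ι A) m = m := by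
  classical
  funext i
  unfold mact
  simp [Matrix.one_apply, ite_smul]

end MatrixNorm

section Tate

variable {A : Type*} [Ring A] {v : A → ℝ}

/-- package of facts about the pseudouniformizer -/
theorem tate_facts (hA : IsBanachTate v) :
    ∃ (ϖ : A) (q : ℝ) (η : ℕ → A), 0 < q ∧ q < 1 ∧
      (∀ t : ℕ, ϖ ^ t * η t = 1) ∧ (∀ t : ℕ, η t * ϖ ^ t = 1) ∧
      (∀ (t : ℕ) (b : A), v (ϖ ^ t * b) = q ^ t * v b) ∧
      (∀ t : ℕ, v (ϖ ^ t) = q ^ t) ∧ (∀ t : ℕ, v (η t) = (q ^ t)⁻¹) := by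
  obtain ⟨ϖ, hu, hlt, hmul⟩ := hA.exists_unit
  have hv := hA.isRingNorm
  set q := v ϖ with hq
  set ω := hu.unit with hω
  have hωv : (ω : A) = ϖ := hu.unit_spec
  have hpowmul : ∀ (t : ℕ) (b : A), v (ϖ ^ t * b) = q ^ t * v b := by
    intro t
    induction t with
    | zero => intro b; simp
    | succ t ih =>
        intro b
        rw [pow_succ', mul_assoc, hmul, ih]
        ring
  have hunit1 : ∀ t : ℕ, ϖ ^ t * ((ω ^ t)⁻¹ : Aˣ) = 1 := by
    intro t
    have h1 : ϖ ^ t = ((ω ^ t : Aˣ) : A) := by rw [Units.val_pow_eq_pow_val, hωv]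
    rw [h1, Units.mul_inv]
  have hunit2 : ∀ t : ℕ, ((ω ^ t)⁻¹ : Aˣ) * ϖ ^ t = 1 := by
    intro t
    have h1 : ϖ ^ t = ((ω ^ t : Aˣ) : A) := by rw [Units.val_pow_eq_pow_val, hωv]
    rw [h1, Units.inv_mul]
  have hvpow : ∀ t : ℕ, v (ϖ ^ t) = q ^ t := by
    intro t
    have := hpowmul t 1
    rwa [mul_one, hv.map_one, mul_one] at this
  have hq0 : 0 < q := by
    have h1 := hpowmul 1 (((ω ^ 1)⁻¹ : Aˣ) : A)
    rw [hunit1 1, hv.map_one, pow_one] at h1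
    rcases lt_or_eq_of_le (hv.nonneg ϖ) with h | h
    · exact h
    · exfalso; rw [← hq] at h; rw [← h] at h1; simp at h1
  have hveta : ∀ t : ℕ, v (((ω ^ t)⁻¹ : Aˣ) : A) = (q ^ t)⁻¹ := by
    intro t
    have h1 := hpowmul t (((ω ^ t)⁻¹ : Aˣ) : A)
    rw [hunit1 t, hv.map_one] at h1
    have hqt : (0:ℝ) < q ^ t := pow_pos hq0 t
    field_simp at h1 ⊢
    linarith
  exact ⟨ϖ, q, fun t => ((ω ^ t)⁻¹ : Aˣ), hq0, hlt, hunit1, hunit2, hpowmul, hvpow, hveta⟩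

end Tate

section OMT

variable {A : Type*} [Ring A] {v : A → ℝ}
variable {M : Type*} [AddCommGroup M] [Module A M]
variable {N : Type*} [AddCommGroup N] [Module A N]

/-- **Open mapping theorem** for Banach modules over a Banach–Tate ring. -/
theorem norm_omt (hA : IsBanachTate v)
    {nmM : M → ℝ} (hM : IsModuleNorm v nmM) (hMc : NormComplete nmM)
    {nmN : N → ℝ} (hN : IsModuleNorm v nmN) (hNc : NormComplete nmN)
    (f : M →ₗ[A] N) (hfs : Function.Surjective f)
    (hfc : NormContinuous nmM nmN f) :
    ∀ ε : ℝ, 0 < ε → ∃ δ : ℝ, 0 < δ ∧ ∀ y : N, nmN y < δ → ∃ m : M, nmM m < ε ∧ f m = y := by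
  have hv := hA.isRingNorm
  obtain ⟨ϖ, q, η, hq0, hq1, hu1, hu2, hpm, hvp, hve⟩ := tate_facts hA
  -- norms of ϖ^t-scalings
  have hsmul_leM : ∀ (t : ℕ) (x : M), nmM (ϖ ^ t • x) ≤ q ^ t * nmM x := by
    intro t x
    have := hM.smul_le (ϖ ^ t) x
    rwa [hvp t] at this
  have hsmul_leN : ∀ (t : ℕ) (x : N), nmN (ϖ ^ t • x) ≤ q ^ t * nmN x := by
    intro t x
    have := hN.smul_le (ϖ ^ t) x
    rwa [hvp t] at this
  have heta_leN : ∀ (t : ℕ) (x : N), nmN (η t • x) ≤ (q ^ t)⁻¹ * nmN x := by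
    intro t x
    have := hN.smul_le (η t) x
    rwa [hve t] at this
  -- the sets D and their closures
  set D : ℕ → Set N := fun k => {y | ∃ m, f m = y ∧ nmM m ≤ (q⁻¹) ^ k} with hD
  set C : ℕ → Set N := fun k => nseqClosure nmN (D k) with hC
  have hCclosed : ∀ k, NormClosed nmN (C k) := fun k => nseqClosure_closed hN _
  have hcover : ∀ x : N, ∃ k, x ∈ C k := by
    intro x
    obtain ⟨m, rfl⟩ := hfs x
    have hq1' : 1 < q⁻¹ := (one_lt_inv₀ hq0).mpr hq1
    obtain ⟨k, hk⟩ := pow_unbounded_of_one_lt (nmM m) hq1'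
    exact ⟨k, subset_nseqClosure hN _ ⟨m, rfl, hk.le⟩⟩
  obtain ⟨k, x₀, ρ, hρ0, hball⟩ := norm_baire hN hNc C hCclosed hcover
  -- C k is closed under subtraction
  have hCsub : ∀ y₁ y₂, y₁ ∈ C k → y₂ ∈ C k → y₁ - y₂ ∈ C k := by
    rintro y₁ y₂ ⟨s, hsD, hsl⟩ ⟨t, htD, htl⟩
    refine ⟨fun n => s n - t n, fun n => ?_, ?_⟩
    · obtain ⟨m₁, hm₁, hb₁⟩ := hsD n
      obtain ⟨m₂, hm₂, hb₂⟩ := htD n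
      exact ⟨m₁ - m₂, by rw [map_sub, hm₁, hm₂], le_trans (hM.sub_le _ _) (max_le hb₁ hb₂)⟩
    · intro ε hε
      obtain ⟨N₁, h₁⟩ := hsl ε hε
      obtain ⟨N₂, h₂⟩ := htl ε hε
      refine ⟨max N₁ N₂, fun i hi => ?_⟩
      have heq : s i - t i - (y₁ - y₂) = (s i - y₁) - (t i - y₂) := by abel
      rw [heq]
      exact lt_of_le_of_lt (hN.sub_le _ _)
        (max_lt (h₁ i (le_trans (le_max_left _ _) hi)) (h₂ i (le_trans (le_max_right _ _) hi)))
  have hball0 : ∀ y : N, nmN y < ρ → y ∈ C k := by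
    intro y hy
    have h1 : x₀ + y ∈ C k := hball _ (by simpa using hy)
    have h2 : x₀ ∈ C k := hball _ (by simpa [hN.map_zero] using hρ0)
    simpa using hCsub _ _ h1 h2
  -- approximation property
  have happrox : ∀ w ∈ C k, ∀ θ : ℝ, 0 < θ → ∃ u : M, nmM u ≤ (q⁻¹) ^ k ∧ nmN (w - f u) < θ := by
    rintro w ⟨s, hsD, hsl⟩ θ hθ
    obtain ⟨N₁, h₁⟩ := hsl θ hθ
    obtain ⟨u, hu, hub⟩ := hsD N₁
    refine ⟨u, hub, ?_⟩
    rw [hN.sub_comm, hu]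
    exact h₁ N₁ le_rfl
  -- the key inductive step
  have key : ∀ (t : ℕ) (w : N), ∃ u : M, nmN w < ρ * q ^ t →
      nmM u ≤ q ^ t * (q⁻¹) ^ k ∧ nmN (w - f u) < ρ * q ^ (t + 1) := by
    intro t w
    by_cases hw : nmN w < ρ * q ^ t
    · have hw' : nmN (η t • w) < ρ := by
        have h1 := heta_leN t w
        have h2 : (q ^ t)⁻¹ * nmN w < (q ^ t)⁻¹ * (ρ * q ^ t) :=
          mul_lt_mul_of_pos_left hw (by positivity)
        have h3 : (q ^ t)⁻¹ * (ρ * q ^ t) = ρ := by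
          rw [mul_comm ρ (q ^ t), ← mul_assoc, inv_mul_cancel₀ (ne_of_gt (pow_pos hq0 t)), one_mul]
        rw [h3] at h2
        exact lt_of_le_of_lt h1 h2
      obtain ⟨u', hu'b, hu'a⟩ := happrox _ (hball0 _ hw') (ρ * q) (by positivity)
      refine ⟨ϖ ^ t • u', fun _ => ⟨?_, ?_⟩⟩
      · exact le_trans (hsmul_leM t u')
          (mul_le_mul_of_nonneg_left hu'b (by positivity))
      · have hw_eq : w = ϖ ^ t • (η t • w) := by
          rw [smul_smul, hu1 t, one_smul]
        have heq : w - f (ϖ ^ t • u') = ϖ ^ t • (η t • w - f u') := by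
          rw [smul_sub, ← hw_eq, map_smul]
        rw [heq]
        calc nmN (ϖ ^ t • (η t • w - f u')) ≤ q ^ t * nmN (η t • w - f u') :=
              hsmul_leN t _
          _ < q ^ t * (ρ * q) := mul_lt_mul_of_pos_left hu'a (by positivity)
          _ = ρ * q ^ (t + 1) := by ring
    · exact ⟨0, fun hw' => absurd hw' hw⟩
  choose U hU using key
  -- now the main argument
  intro ε hε
  obtain ⟨j, hj⟩ := exists_pow_lt_of_lt_one (show (0:ℝ) < ε * q ^ k by positivity) hq1
  have hjlt : q ^ j * (q⁻¹) ^ k < ε := by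
    rw [inv_pow]
    rw [mul_inv_lt_iff₀ (pow_pos hq0 k)]
    linarith [hj]
  refine ⟨ρ * q ^ j, by positivity, fun y hy => ?_⟩
  set z : N := η j • y with hz
  have hz0 : nmN z < ρ := by
    have h1 := heta_leN j y
    have h2 : (q ^ j)⁻¹ * nmN y < (q ^ j)⁻¹ * (ρ * q ^ j) :=
      mul_lt_mul_of_pos_left hy (by positivity)
    have h3 : (q ^ j)⁻¹ * (ρ * q ^ j) = ρ := by
      rw [mul_comm ρ (q ^ j), ← mul_assoc, inv_mul_cancel₀ (ne_of_gt (pow_pos hq0 j)), one_mul]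
    rw [h3] at h2
    exact lt_of_le_of_lt h1 h2
  -- iterate
  obtain ⟨g, hg0, hgs⟩ : ∃ g : ℕ → N, g 0 = z ∧ ∀ t, g (t + 1) = g t - f (U t (g t)) :=
    ⟨fun n => Nat.rec z (fun t w => w - f (U t w)) n, rfl, fun _ => rfl⟩
  have hinv : ∀ t, nmN (g t) < ρ * q ^ t := by
    intro t
    induction t with
    | zero => rw [hg0]; simpa using hz0
    | succ t ih =>
        rw [hgs]
        exact ((hU t (g t)) ih).2
  have hmb : ∀ t, nmM (U t (g t)) ≤ q ^ t * (q⁻¹) ^ k := fun t => ((hU t (g t)) (hinv t)).1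
  set S : ℕ → M := fun T => ∑ t ∈ Finset.range T, U t (g t) with hS
  have hSd : ∀ i jj, jj ≤ i → nmM (S i - S jj) ≤ q ^ jj * (q⁻¹) ^ k := by
    intro i jj hji
    have heq : S i - S jj = ∑ t ∈ Finset.Ico jj i, U t (g t) := by
      rw [hS, ← Finset.sum_Ico_eq_sub _ hji]
    rw [heq]
    refine hM.sum_le _ _ (by positivity) fun t ht => ?_
    refine le_trans (hmb t) (mul_le_mul_of_nonneg_right ?_ (by positivity))
    exact pow_le_pow_of_le_one hq0.le hq1.le (Finset.mem_Ico.mp ht).1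
  have hScauchy : NormCauchy nmM S := by
    intro ε' hε'
    obtain ⟨J, hJ⟩ := exists_pow_lt_of_lt_one (show (0:ℝ) < ε' * q ^ k by positivity) hq1
    have hJlt : q ^ J * (q⁻¹) ^ k < ε' := by
      rw [inv_pow, mul_inv_lt_iff₀ (pow_pos hq0 k)]
      linarith [hJ]
    refine ⟨J, fun a b ha hb => ?_⟩
    rcases le_total b a with h | h
    · refine lt_of_le_of_lt (le_trans (hSd a b h) ?_) hJlt
      exact mul_le_mul_of_nonneg_right (pow_le_pow_of_le_one hq0.le hq1.le hb) (by positivity)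
    · rw [hM.sub_comm]
      refine lt_of_le_of_lt (le_trans (hSd b a h) ?_) hJlt
      exact mul_le_mul_of_nonneg_right (pow_le_pow_of_le_one hq0.le hq1.le ha) (by positivity)
  obtain ⟨m, hm⟩ := hMc S hScauchy
  have hmbound : nmM m ≤ (q⁻¹) ^ k := by
    refine hm.norm_le hM fun T => ?_
    refine hM.sum_le _ _ (by positivity) fun t _ => ?_
    refine le_trans (hmb t) ?_
    have : q ^ t ≤ 1 := pow_le_one₀ hq0.le hq1.le
    nlinarith [pow_pos (show (0:ℝ) < q⁻¹ by positivity) k]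
  have hfS : ∀ T, f (S T) = z - g T := by
    intro T
    induction T with
    | zero => simp [hS, hg0]
    | succ T ih =>
        have : S (T + 1) = S T + U T (g T) := Finset.sum_range_succ _ _
        rw [this, map_add, ih, hgs]
        abel
  have hfm : f m = z := by
    have hzero : nmN (z - f m) = 0 := by
      by_contra hne
      have hpos : 0 < nmN (z - f m) := lt_of_le_of_ne (hN.nonneg _) (Ne.symm hne)
      obtain ⟨δf, hδf0, hδf⟩ := hfc m (nmN (z - f m)) hpos
      obtain ⟨T₁, hT₁⟩ := hm δf hδf0
      obtain ⟨T₂, hT₂⟩ := exists_pow_lt_of_lt_one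
        (show (0:ℝ) < nmN (z - f m) / ρ by positivity) hq1
      set T := max T₁ T₂ with hT
      have h1 : nmN (f (S T) - f m) < nmN (z - f m) := hδf (S T) (hT₁ T (le_max_left _ _))
      have h2 : nmN (z - f (S T)) < nmN (z - f m) := by
        rw [hfS T]
        have heq : z - (z - g T) = g T := by abel
        rw [heq]
        have hqT : q ^ T ≤ q ^ T₂ := pow_le_pow_of_le_one hq0.le hq1.le (le_max_right _ _)
        have hstep : ρ * q ^ T < nmN (z - f m) := by
          calc ρ * q ^ T ≤ ρ * q ^ T₂ := mul_le_mul_of_nonneg_left hqT hρ0.le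
            _ < ρ * (nmN (z - f m) / ρ) := mul_lt_mul_of_pos_left hT₂ hρ0
            _ = nmN (z - f m) := by field_simp
        exact lt_trans (hinv T) hstep
      exact lt_irrefl _ (lt_of_le_of_lt (hN.tri z (f (S T)) (f m)) (max_lt h2 h1))
    exact (sub_eq_zero.mp ((hN.eq_zero_iff _).mp hzero)).symm
  refine ⟨ϖ ^ j • m, ?_, ?_⟩
  · exact lt_of_le_of_lt (le_trans (hsmul_leM j m)
      (mul_le_mul_of_nonneg_left hmbound (by positivity))) hjlt
  · rw [map_smul, hfm, hz, smul_smul, hu1 j, one_smul]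

end OMT

section Subtype

variable {A : Type*} [Ring A] {v : A → ℝ}
variable {M : Type*} [AddCommGroup M] [Module A M] {nm : M → ℝ}

/-- restriction of a norm to a submodule -/
theorem subnorm_isModuleNorm (h : IsModuleNorm v nm) (S : Submodule A M) :
    IsModuleNorm v (fun x : S => nm (x : M)) := by
  refine ⟨fun x => h.nonneg _, fun x => ?_, fun x => ?_, fun x y => ?_, fun a x => ?_⟩
  · rw [h.eq_zero_iff]
    exact ⟨fun hh => Subtype.ext hh, fun hh => by rw [hh]; rfl⟩
  · exact h.map_neg _
  · exact h.add_le _ _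
  · exact h.smul_le _ _

theorem subnorm_complete (h : IsModuleNorm v nm) (hc : NormComplete nm) (S : Submodule A M)
    (hS : NormClosed nm (S : Set M)) : NormComplete (fun x : S => nm (x : M)) := by
  intro s hs
  obtain ⟨x, hx⟩ := hc (fun n => (s n : M)) (by
    intro ε hε
    obtain ⟨N, hN⟩ := hs ε hε
    exact ⟨N, fun i j hi hj => hN i j hi hj⟩)
  have hxS : x ∈ S := hS (fun n => (s n : M)) x (fun n => (s n).2) hx
  exact ⟨⟨x, hxS⟩, fun ε hε => hx ε hε⟩

end Subtype

section Closedness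

variable {A : Type*} [Ring A] {v : A → ℝ}
variable {M : Type*} [AddCommGroup M] [Module A M]

/-- **Key lemma**: over a noetherian Banach–Tate ring, every submodule of a finite
Banach module is closed. -/
theorem submodule_normClosed (hA : IsBanachTate v) (hnoeth : IsNoetherianRing A)
    [Module.Finite A M] {nm : M → ℝ} (hM : IsModuleNorm v nm) (hMc : NormComplete nm)
    (S : Submodule A M) : NormClosed nm (S : Set M) := by
  have hv := hA.isRingNorm
  -- the sequential closure of S is a submodule
  set T : Submodule A M :=
    { carrier := nseqClosure nm (S : Set M)
      add_mem' := by
        rintro x y ⟨s, hsS, hsl⟩ ⟨t, htS, htl⟩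
        exact ⟨fun n => s n + t n, fun n => S.add_mem (hsS n) (htS n), hsl.add hM htl⟩
      zero_mem' := subset_nseqClosure hM _ S.zero_mem
      smul_mem' := by
        rintro a x ⟨s, hsS, hsl⟩
        exact ⟨fun n => a • s n, fun n => S.smul_mem a (hsS n), hsl.smul hM hv a⟩ } with hT
  have hST : (S : Set M) ⊆ (T : Set M) := subset_nseqClosure hM _
  have hTclosed : NormClosed nm (T : Set M) := nseqClosure_closed hM _
  -- it suffices to show T ≤ S
  suffices hTS : (T : Set M) ⊆ (S : Set M) by
    intro s x hs hl
    exact hTS (⟨s, hs, hl⟩ : x ∈ nseqClosure nm (S : Set M))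
  -- T is finitely generated
  haveI : IsNoetherian A M := isNoetherian_of_isNoetherianRing_of_finite A M
  obtain ⟨r, b, hb⟩ := Submodule.fg_iff_exists_fin_generating_family.mp (IsNoetherian.noetherian T)
  rcases Nat.eq_zero_or_pos r with hr | hr
  · subst hr
    have : Set.range b = ∅ := Set.range_eq_empty b
    rw [this, Submodule.span_empty] at hb
    intro x hx
    have : x ∈ T := hx
    rw [← hb] at this
    have : x = 0 := this
    rw [this]; exact S.zero_mem
  haveI : Nonempty (Fin r) := ⟨⟨0, hr⟩⟩
  -- T is a Banach module
  set nmT : T → ℝ := fun x => nm (x : M) with hnmT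
  have hTn : IsModuleNorm v nmT := subnorm_isModuleNorm hM T
  have hTc : NormComplete nmT := subnorm_complete hM hMc T hTclosed
  -- the surjection onto T
  have hmem : ∀ c : Fin r → A, combo b c ∈ T := by
    intro c
    have : combo b c ∈ LinearMap.range (combo b) := ⟨c, rfl⟩
    rwa [combo_range, hb] at this
  set cb : (Fin r → A) →ₗ[A] T := LinearMap.codRestrict T (combo b) hmem with hcb
  have hcbs : Function.Surjective cb := by
    rintro ⟨x, hx⟩
    rw [← hb, ← combo_range] at hx
    obtain ⟨c, hc⟩ := hx
    exact ⟨c, Subtype.ext hc⟩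
  have hcbc : NormContinuous (pinorm v) nmT cb := by
    intro c ε hε
    obtain ⟨δ, hδ0, hδ⟩ := combo_continuous hM hv b c ε hε
    exact ⟨δ, hδ0, fun c' hc' => hδ c' hc'⟩
  obtain ⟨δ, hδ0, hδ⟩ := norm_omt hA (pinorm_isModuleNorm hv) (pinorm_complete hv hA.complete)
    hTn hTc cb hcbs hcbc (1/2) (by norm_num)
  -- approximate the generators by elements of S
  have happrox : ∀ i : Fin r, ∃ x : M, x ∈ S ∧ nm (b i - x) < δ := by
    intro i
    have hbi : b i ∈ T := by
      rw [← hb]; exact Submodule.subset_span ⟨i, rfl⟩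
    obtain ⟨s, hsS, hsl⟩ := (hbi : b i ∈ nseqClosure nm (S : Set M))
    obtain ⟨Nn, hNn⟩ := hsl δ hδ0
    refine ⟨s Nn, hsS Nn, ?_⟩
    rw [hM.sub_comm]
    exact hNn Nn le_rfl
  choose x hxS hxd using happrox
  -- write the errors as small combinations of the generators
  have hkey : ∀ i : Fin r, ∃ c : Fin r → A, pinorm v c < 1/2 ∧ combo b c = b i - x i := by
    intro i
    have hbi : b i ∈ T := by rw [← hb]; exact Submodule.subset_span ⟨i, rfl⟩
    have hdT : b i - x i ∈ T := T.sub_mem hbi (hST (hxS i))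
    obtain ⟨c, hc1, hc2⟩ := hδ ⟨b i - x i, hdT⟩ (by simpa [hnmT] using hxd i)
    exact ⟨c, hc1, congrArg Subtype.val hc2⟩
  choose c hc1 hc2 using hkey
  set E : Matrix (Fin r) (Fin r) A := Matrix.of fun i j => c i j with hE
  have hEnorm : mnorm v E < 1 := by
    refine lt_of_le_of_lt (mnorm_le hv (by norm_num) fun i j => ?_) (by norm_num : (1:ℝ)/2 < 1)
    exact le_trans (coord_le_pinorm hv (c i) j) (hc1 i).le
  obtain ⟨u, hu1, hu2⟩ := geom_unit (mnorm_isRingNorm hv) (mnorm_complete hv hA.complete) hEnorm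
  -- the matrix identity
  have hact : mact ((1 : Matrix (Fin r) (Fin r) A) - E) b = x := by
    funext i
    have h1 : mact ((1 : Matrix (Fin r) (Fin r) A) - E) b i
        = mact (1 : Matrix (Fin r) (Fin r) A) b i - mact E b i := by
      unfold mact
      rw [← Finset.sum_sub_distrib]
      congr 1
      funext j
      rw [Matrix.sub_apply, sub_smul]
    rw [h1, mact_one]
    have h2 : mact E b i = b i - x i := by
      have := hc2 i
      rw [combo_apply] at this
      exact this
    rw [h2]
    abel
  have hfinal : ∀ i, b i ∈ S := by
    intro i
    have h3 : b = mact u x := by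
      have : mact (u * ((1 : Matrix (Fin r) (Fin r) A) - E)) b = mact u x := by
        rw [mact_mul, hact]
      rwa [hu1, mact_one] at this
    rw [h3]
    exact Submodule.sum_mem _ fun j _ => Submodule.smul_mem _ _ (hxS j)
  intro y hy
  have : y ∈ T := hy
  rw [← hb] at this
  have hle : Submodule.span A (Set.range b) ≤ S := by
    rw [Submodule.span_le]
    rintro _ ⟨i, rfl⟩
    exact hfinal i
  exact hle this

end Closedness

section Quotient

variable {A : Type*} [Ring A] {v : A → ℝ}
variable {M : Type*} [AddCommGroup M] [Module A M]

/-- existence of a complete norm on a finite module -/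
theorem exists_complete_norm (hA : IsBanachTate v) (hnoeth : IsNoetherianRing A)
    [Module.Finite A M] : ∃ nm : M → ℝ, IsModuleNorm v nm ∧ NormComplete nm := by
  have hv := hA.isRingNorm
  obtain ⟨n, b, hb⟩ := Module.Finite.exists_fin (R := A) (M := M)
  set π : (Fin n → A) →ₗ[A] M := combo b with hπ
  have hπs : Function.Surjective π := by
    rw [← LinearMap.range_eq_top, combo_range, hb]
  have hπn := pinorm_isModuleNorm (ι := Fin n) hv
  have hπc := pinorm_complete (ι := Fin n) hv hA.complete
  have hK : NormClosed (pinorm v) ((LinearMap.ker π : Submodule A (Fin n → A)) : Set (Fin n → A)) :=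
    submodule_normClosed hA hnoeth hπn hπc _
  -- quotient norm
  set qn : M → ℝ := fun m => sInf (pinorm v '' {c | π c = m}) with hqn
  have hne : ∀ m : M, (pinorm v '' {c | π c = m}).Nonempty := by
    intro m
    obtain ⟨c, hc⟩ := hπs m
    exact ⟨pinorm v c, c, hc, rfl⟩
  have hbdd : ∀ m : M, BddBelow (pinorm v '' {c | π c = m}) := by
    intro m
    exact ⟨0, by rintro _ ⟨c, _, rfl⟩; exact pinorm_nonneg _⟩
  have hqn_le : ∀ (m : M) (c : Fin n → A), π c = m → qn m ≤ pinorm v c := by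
    intro m c hc
    exact csInf_le (hbdd m) ⟨c, hc, rfl⟩
  have hqn_nonneg : ∀ m, 0 ≤ qn m := by
    intro m
    exact le_csInf (hne m) (by rintro _ ⟨c, _, rfl⟩; exact pinorm_nonneg _)
  have hlift : ∀ (m : M) (θ : ℝ), qn m < θ → ∃ c, π c = m ∧ pinorm v c < θ := by
    intro m θ hθ
    obtain ⟨_, ⟨c, hc, rfl⟩, hlt⟩ := exists_lt_of_csInf_lt (hne m) hθ
    exact ⟨c, hc, hlt⟩
  have hqn_zero : qn 0 = 0 := by
    refine le_antisymm ?_ (hqn_nonneg 0)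
    have h0 : pinorm v (0 : Fin n → A) = 0 := (pinorm_eq_zero_iff hv _).mpr rfl
    have h1 := hqn_le 0 0 (map_zero π)
    rwa [h0] at h1
  have hmod : IsModuleNorm v qn := by
    refine ⟨hqn_nonneg, ?_, ?_, ?_, ?_⟩
    · intro m
      constructor
      · intro h0
        -- lifts with norm → 0 ; fixed lift stays in ker after limit
        obtain ⟨c₀, hc₀⟩ := hπs m
        have hseq : ∀ k : ℕ, ∃ c, π c = m ∧ pinorm v c < (1/2) ^ k := by
          intro k
          exact hlift m _ (by rw [h0]; positivity)
        choose cs hcs1 hcs2 using hseq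
        have hker : ∀ k, c₀ - cs k ∈ LinearMap.ker π := by
          intro k
          rw [LinearMap.mem_ker, map_sub, hc₀, hcs1 k, sub_self]
        have hlim : NormLim (pinorm v) (fun k => c₀ - cs k) c₀ := by
          intro ε hε
          obtain ⟨K, hK2⟩ := exists_pow_lt_of_lt_one hε (show (1:ℝ)/2 < 1 by norm_num)
          refine ⟨K, fun i hi => ?_⟩
          have heq : c₀ - cs i - c₀ = -(cs i) := by abel
          rw [heq, hπn.map_neg]
          exact lt_of_lt_of_le (lt_of_lt_of_le (hcs2 i)
            (pow_le_pow_of_le_one (by norm_num) (by norm_num) hi)) hK2.le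
        have hc₀ker : c₀ ∈ LinearMap.ker π := hK _ _ hker hlim
        rw [LinearMap.mem_ker] at hc₀ker
        rw [← hc₀, hc₀ker]
      · intro h; subst h; exact hqn_zero
    · intro m
      have haux : ∀ m' : M, qn (-m') ≤ qn m' := by
        intro m'
        refine le_csInf (hne m') ?_
        rintro _ ⟨c, hc, rfl⟩
        have : π (-c) = -m' := by rw [map_neg, hc]
        exact le_trans (hqn_le _ _ this) (le_of_eq (hπn.map_neg c))
      exact le_antisymm (haux m) (by simpa using haux (-m))
    · intro m₁ m₂
      by_contra hcon
      push_neg at hcon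
      set θ := (qn (m₁ + m₂) + max (qn m₁) (qn m₂)) / 2
      have h1 : max (qn m₁) (qn m₂) < θ := by
        simp only [θ]; linarith
      obtain ⟨c₁, hc₁, hb₁⟩ := hlift m₁ θ (lt_of_le_of_lt (le_max_left _ _) h1)
      obtain ⟨c₂, hc₂, hb₂⟩ := hlift m₂ θ (lt_of_le_of_lt (le_max_right _ _) h1)
      have h2 : qn (m₁ + m₂) ≤ pinorm v (c₁ + c₂) := hqn_le _ _ (by rw [map_add, hc₁, hc₂])
      have h3 := hπn.add_le c₁ c₂
      have h4 : qn (m₁ + m₂) < θ := lt_of_le_of_lt (le_trans h2 h3) (max_lt hb₁ hb₂)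
      simp only [θ] at h4
      linarith
    · intro a m
      by_contra hcon
      push_neg at hcon
      -- qn (a • m) > v a * qn m ; pick lift slightly above qn m
      have hva : 0 ≤ v a := hv.nonneg a
      rcases eq_or_lt_of_le hva with heq0 | hpos
      · have ha0 : a = 0 := (hv.eq_zero_iff a).mp heq0.symm
        rw [ha0, hv.map_zero, zero_mul, zero_smul, hqn_zero] at hcon
        exact lt_irrefl _ hcon
      · set θ := (qn (a • m) / v a + qn m) / 2
        have hθ : qn m < θ := by
          have : v a * qn m < qn (a • m) := hcon
          have h5 : qn m < qn (a • m) / v a := by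
            rw [lt_div_iff₀ hpos]; linarith [this]
          simp only [θ]; linarith
        obtain ⟨c, hc, hcb⟩ := hlift m θ hθ
        have h2 : qn (a • m) ≤ pinorm v (a • c) := hqn_le _ _ (by rw [map_smul, hc])
        have h3 := hπn.smul_le a c
        have h4 : qn (a • m) < v a * θ :=
          lt_of_le_of_lt (le_trans h2 h3) (mul_lt_mul_of_pos_left hcb hpos)
        have h5 : v a * θ < qn (a • m) := by
          have hd : θ < qn (a • m) / v a := by
            have : v a * qn m < qn (a • m) := hcon
            have h6 : qn m < qn (a • m) / v a := by rw [lt_div_iff₀ hpos]; linarith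
            simp only [θ]; linarith
          calc v a * θ < v a * (qn (a • m) / v a) := mul_lt_mul_of_pos_left hd hpos
            _ = qn (a • m) := by field_simp
        linarith
  refine ⟨qn, hmod, ?_⟩
  -- completeness of the quotient norm
  intro s hs
  have hNk : ∀ k : ℕ, ∃ Nk : ℕ, ∀ i j, Nk ≤ i → Nk ≤ j → qn (s i - s j) < (1/2) ^ k :=
    fun k => hs _ (by positivity)
  choose Nf hNf using hNk
  obtain ⟨φ, hφ0, hφs⟩ : ∃ φ : ℕ → ℕ, φ 0 = Nf 0 ∧ ∀ k, φ (k+1) = max (φ k + 1) (Nf (k+1)) :=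
    ⟨fun n => Nat.rec (Nf 0) (fun k p => max (p + 1) (Nf (k+1))) n, rfl, fun _ => rfl⟩
  have hφN : ∀ k, Nf k ≤ φ k := by
    intro k
    cases k with
    | zero => rw [hφ0]
    | succ k => rw [hφs]; exact le_max_right _ _
  have hφmono : ∀ k, φ k < φ (k+1) := by
    intro k
    rw [hφs]
    exact lt_of_lt_of_le (Nat.lt_succ_self _) (le_max_left _ _)
  have hφk : ∀ k, k ≤ φ k := by
    intro k
    induction k with
    | zero => exact Nat.zero_le _
    | succ k ih => exact Nat.succ_le_of_lt (lt_of_le_of_lt ih (hφmono k))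
  have hdk : ∀ k, qn (s (φ (k+1)) - s (φ k)) < (1/2) ^ k := by
    intro k
    exact hNf k _ _ (le_trans (hφN k) (le_of_lt (hφmono k))) (hφN k)
  -- lift the differences
  obtain ⟨c₀, hc₀⟩ := hπs (s (φ 0))
  have hck : ∀ k, ∃ ck, π ck = s (φ (k+1)) - s (φ k) ∧ pinorm v ck < (1/2) ^ k :=
    fun k => hlift _ _ (hdk k)
  choose cs hcs1 hcs2 using hck
  set t : ℕ → (Fin n → A) := fun T => c₀ + ∑ k ∈ Finset.range T, cs k with ht
  have htd : ∀ i j, j ≤ i → pinorm v (t i - t j) ≤ (1/2) ^ j := by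
    intro i j hji
    have heq : t i - t j = ∑ k ∈ Finset.Ico j i, cs k := by
      rw [ht]
      simp only [add_sub_add_left_eq_sub]
      rw [← Finset.sum_Ico_eq_sub _ hji]
    rw [heq]
    refine hπn.sum_le _ _ (by positivity) fun k hk => ?_
    exact le_trans (hcs2 k).le (pow_le_pow_of_le_one (by norm_num) (by norm_num)
      (Finset.mem_Ico.mp hk).1)
  have htc : NormCauchy (pinorm v) t := by
    intro ε hε
    obtain ⟨K, hK2⟩ := exists_pow_lt_of_lt_one hε (show (1:ℝ)/2 < 1 by norm_num)
    refine ⟨K, fun i j hi hj => ?_⟩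
    rcases le_total j i with h | h
    · exact lt_of_le_of_lt (le_trans (htd i j h)
        (pow_le_pow_of_le_one (by norm_num) (by norm_num) hj)) hK2
    · rw [hπn.sub_comm]
      exact lt_of_le_of_lt (le_trans (htd j i h)
        (pow_le_pow_of_le_one (by norm_num) (by norm_num) hi)) hK2
  obtain ⟨cl, hcl⟩ := hπc t htc
  have hπt : ∀ T, π (t T) = s (φ T) := by
    intro T
    induction T with
    | zero => simp [ht, hc₀]
    | succ T ih =>
        have : t (T + 1) = t T + cs T := by
          show c₀ + ∑ k ∈ Finset.range (T+1), cs k = (c₀ + ∑ k ∈ Finset.range T, cs k) + cs T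
          rw [Finset.sum_range_succ]; abel
        rw [this, map_add, ih, hcs1 T]
        abel
  have hsub : NormLim qn (s ∘ φ) (π cl) := by
    intro ε hε
    obtain ⟨K, hK2⟩ := hcl ε hε
    refine ⟨K, fun i hi => ?_⟩
    have h1 : qn (s (φ i) - π cl) ≤ pinorm v (t i - cl) :=
      hqn_le _ _ (by rw [map_sub, hπt i])
    exact lt_of_le_of_lt h1 (hK2 i hi)
  exact ⟨π cl, normCauchy_lim_of_subseq hmod hs hφk hsub⟩

end Quotient

section Continuity

variable {A : Type*} [Ring A] {v : A → ℝ}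
variable {M : Type*} [AddCommGroup M] [Module A M]
variable {N : Type*} [AddCommGroup N] [Module A N]

/-- any linear map from a finite Banach module to a normed module is continuous -/
theorem finite_continuous (hA : IsBanachTate v) [Module.Finite A M]
    {nmM : M → ℝ} (hM : IsModuleNorm v nmM) (hMc : NormComplete nmM)
    {nmN : N → ℝ} (hN : IsModuleNorm v nmN) (f : M →ₗ[A] N) :
    NormContinuous nmM nmN f := by
  classical
  have hv := hA.isRingNorm
  obtain ⟨n, b, hb⟩ := Module.Finite.exists_fin (R := A) (M := M)
  set π : (Fin n → A) →ₗ[A] M := combo b with hπ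
  have hπs : Function.Surjective π := by
    rw [← LinearMap.range_eq_top, combo_range, hb]
  have hπn := pinorm_isModuleNorm (ι := Fin n) hv
  have hπc := pinorm_complete (ι := Fin n) hv hA.complete
  have hπcont : NormContinuous (pinorm v) nmM π := combo_continuous hM hv b
  -- bound for f on the generators
  set B : ℝ := ((Finset.univ.sup fun i => (nmN (f (b i))).toNNReal : ℝ≥0) : ℝ) + 1 with hB
  have hB0 : 0 < B := by positivity
  have hbB : ∀ i, nmN (f (b i)) ≤ B := by
    intro i
    have h1 : ((nmN (f (b i))).toNNReal : ℝ)
        ≤ ((Finset.univ.sup fun i => (nmN (f (b i))).toNNReal : ℝ≥0) : ℝ) :=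
      NNReal.coe_le_coe.mpr (Finset.le_sup (f := fun i => (nmN (f (b i))).toNNReal)
        (Finset.mem_univ i))
    rw [Real.coe_toNNReal _ (hN.nonneg _)] at h1
    rw [hB]; linarith
  intro m ε hε
  obtain ⟨δ, hδ0, hδ⟩ := norm_omt hA hπn hπc hM hMc π hπs hπcont (ε / B) (by positivity)
  refine ⟨δ, hδ0, fun m' hm' => ?_⟩
  obtain ⟨c, hc1, hc2⟩ := hδ (m' - m) hm'
  have heq : f m' - f m = ∑ i, c i • f (b i) := by
    rw [← map_sub, ← hc2]
    show f (π c) = _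
    rw [hπ, combo_apply, map_sum]
    congr 1
    funext i
    rw [map_smul]
  rw [heq]
  have h2 : nmN (∑ i, c i • f (b i)) ≤ pinorm v c * B := by
    refine hN.sum_le _ _ (mul_nonneg (pinorm_nonneg _) hB0.le) fun i _ => ?_
    exact le_trans (hN.smul_le _ _)
      (mul_le_mul (coord_le_pinorm hv c i) (hbB i) (hN.nonneg _) (pinorm_nonneg _))
  calc nmN (∑ i, c i • f (b i)) ≤ pinorm v c * B := h2
    _ < (ε / B) * B := mul_lt_mul_of_pos_right hc1 hB0
    _ = ε := by field_simp

end Continuity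

theorem finite_module_banach_norm_unique_and_maps'
    {A : Type u} [Ring A] (v : A → ℝ) (hA : IsBanachTate v)
    (hnoeth : IsNoetherianRing A) :
    (∀ (M : Type u) [AddCommGroup M] [Module A M], Module.Finite A M →
      (∃ nm : M → ℝ, IsModuleNorm v nm ∧ NormComplete nm) ∧
      (∀ nm nm' : M → ℝ, IsModuleNorm v nm → NormComplete nm →
        IsModuleNorm v nm' → NormComplete nm' → NormEquiv nm nm')) ∧
    (∀ (M : Type u) [AddCommGroup M] [Module A M], Module.Finite A M →
     ∀ (N : Type u) [AddCommGroup N] [Module A N], Module.Finite A N →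
     ∀ (nmM : M → ℝ), IsModuleNorm v nmM → NormComplete nmM →
     ∀ (nmN : N → ℝ), IsModuleNorm v nmN → NormComplete nmN →
     ∀ f : M →ₗ[A] N,
       NormContinuous nmM nmN f ∧
       NormClosed nmN (LinearMap.range f : Set N) ∧
       (∀ U : Set M, NormOpenSet nmM U →
         NormOpenIn nmN (LinearMap.range f : Set N) (f '' U))) := by
  constructor
  · intro M _ _ hfin
    haveI := hfin
    constructor
    · exact exists_complete_norm hA hnoeth
    · intro nm nm' h1 h1c h2 h2c
      constructor
      · have := finite_continuous hA h1 h1c h2 (LinearMap.id (R := A) (M := M))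
        rwa [LinearMap.id_coe] at this
      · have := finite_continuous hA h2 h2c h1 (LinearMap.id (R := A) (M := M))
        rwa [LinearMap.id_coe] at this
  · intro M _ _ hfinM N _ _ hfinN nmM hM hMc nmN hN hNc f
    haveI := hfinM
    haveI := hfinN
    refine ⟨finite_continuous hA hM hMc hN f,
      submodule_normClosed hA hnoeth hN hNc _, ?_⟩
    set R := LinearMap.range f with hR
    have hRclosed : NormClosed nmN (R : Set N) := submodule_normClosed hA hnoeth hN hNc R
    have hRn := subnorm_isModuleNorm hN R
    have hRc := subnorm_complete hN hNc R hRclosed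
    set f' : M →ₗ[A] R := f.rangeRestrict with hf'
    have hf's : Function.Surjective f' := f.surjective_rangeRestrict
    have hf'c : NormContinuous nmM (fun x : R => nmN (x : N)) f' := by
      intro m ε hε
      obtain ⟨δ, hδ0, hδ⟩ := finite_continuous hA hM hMc hN f m ε hε
      exact ⟨δ, hδ0, fun m' hm' => hδ m' hm'⟩
    intro U hU x hx
    obtain ⟨u, huU, rfl⟩ := hx
    obtain ⟨εU, hεU0, hεU⟩ := hU u huU
    obtain ⟨δ, hδ0, hδ⟩ := norm_omt hA hM hMc hRn hRc f' hf's hf'c εU hεU0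
    refine ⟨δ, hδ0, fun y hyR hyd => ?_⟩
    have hyR' : y ∈ R := hyR
    have hsub : y - f u ∈ R := R.sub_mem hyR' (LinearMap.mem_range_self f u)
    obtain ⟨m', hm'lt, hm'eq⟩ := hδ ⟨y - f u, hsub⟩ hyd
    have hm'N : f m' = y - f u := congrArg Subtype.val hm'eq
    refine ⟨u + m', hεU (u + m') (by simpa using hm'lt), ?_⟩
    rw [map_add, hm'N]
    abel


/-- Over a noetherian Banach–Tate ring: (i) every finitely generated
module has a Banach module norm, unique up to equivalence; (ii) any linear map of
finite Banach modules is continuous, has closed image, and the induced surjection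
onto its image is open. -/
theorem finite_module_banach_norm_unique_and_maps
    {A : Type u} [Ring A] (v : A → ℝ) (hA : IsBanachTate v)
    (hnoeth : IsNoetherianRing A) :
    (∀ (M : Type u) [AddCommGroup M] [Module A M], Module.Finite A M →
      (∃ nm : M → ℝ, IsModuleNorm v nm ∧ NormComplete nm) ∧
      (∀ nm nm' : M → ℝ, IsModuleNorm v nm → NormComplete nm →
        IsModuleNorm v nm' → NormComplete nm' → NormEquiv nm nm')) ∧
    (∀ (M : Type u) [AddCommGroup M] [Module A M], Module.Finite A M →
     ∀ (N : Type u) [AddCommGroup N] [Module A N], Module.Finite A N →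
     ∀ (nmM : M → ℝ), IsModuleNorm v nmM → NormComplete nmM →
     ∀ (nmN : N → ℝ), IsModuleNorm v nmN → NormComplete nmN →
     ∀ f : M →ₗ[A] N,
       NormContinuous nmM nmN f ∧
       NormClosed nmN (LinearMap.range f : Set N) ∧
       (∀ U : Set M, NormOpenSet nmM U →
         NormOpenIn nmN (LinearMap.range f : Set N) (f '' U))) :=
  finite_module_banach_norm_unique_and_maps' v hA hnoeth
end

section
/- Let A be a noetherian Banach–Tate ring, let M and N be ONable Banach A-modules with ON bases (e_i)_{i∈I} and (f_j)_{j∈J}, and let φ:M→N be a continuous A-linear map with matrix (a_{i,j}). Then φ is compact if and only if lim_{j→∞} sup_{i∈I}|a_{i,j}|=0, i.e. if and only if for every ε>0 there are only finitely many j∈J with sup_{i∈I}|a_{i,j}|>ε. -/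
open scoped Classical

universe u v w

/-- `cA v hv I` is the Banach `A`-module `c_A(I)` of functions `I → A` tending to zero:
for every `ε > 0` only finitely many `i` satisfy `v (f i) > ε`. -/
def cA {A : Type u} [Ring A] (v : A → ℝ) (hv : IsRingNorm v) (I : Type v) :
    Submodule A (I → A) where
  carrier := {f | ∀ ε : ℝ, 0 < ε → {i : I | ε < v (f i)}.Finite}
  add_mem' := by
    intro f g hf hg ε hε
    refine ((hf ε hε).union (hg ε hε)).subset ?_
    intro i hi
    simp only [Set.mem_setOf_eq, Pi.add_apply] at hi
    simp only [Set.mem_union, Set.mem_setOf_eq]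
    by_contra hc
    push_neg at hc
    have h := le_trans (hv.add_le (f i) (g i)) (max_le hc.1 hc.2)
    exact absurd hi (not_lt.mpr h)
  zero_mem' := by
    intro ε hε
    have : {i : I | ε < v ((0 : I → A) i)} = ∅ := by
      ext i
      simp only [Set.mem_setOf_eq, Pi.zero_apply, Set.mem_empty_iff_false, iff_false, not_lt,
        hv.map_zero]
      exact le_of_lt hε
    rw [this]; exact Set.finite_empty
  smul_mem' := by
    intro a f hf ε hε
    rcases eq_or_ne a 0 with rfl | ha
    · refine Set.finite_empty.subset ?_
      intro i hi
      simp only [Set.mem_setOf_eq, Pi.smul_apply, zero_smul, hv.map_zero] at hi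
      exact absurd hi (not_lt.mpr (le_of_lt hε))
    · have hva : 0 < v a := by
        rcases lt_or_eq_of_le (hv.nonneg a) with h | h
        · exact h
        · exact absurd ((hv.eq_zero_iff a).mp h.symm) ha
      refine (hf (ε / v a) (div_pos hε hva)).subset ?_
      intro i hi
      simp only [Set.mem_setOf_eq, Pi.smul_apply, smul_eq_mul] at hi
      simp only [Set.mem_setOf_eq]
      rw [div_lt_iff₀ hva]
      calc ε < v (a * f i) := hi
        _ ≤ v a * v (f i) := hv.mul_le a (f i)
        _ = v (f i) * v a := mul_comm _ _

/-- The norm on `c_A(I)`: the supremum (= maximum) of the norms of the values. -/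
noncomputable def cNorm {A : Type u} [Ring A] (v : A → ℝ) {hv : IsRingNorm v} {I : Type v}
    (f : cA v hv I) : ℝ :=
  ⨆ i : I, v ((f : I → A) i)

/-- The canonical `i`-th basis vector `e_i` of `c_A(I)`. -/
noncomputable def stdDelta {A : Type u} [Ring A] (v : A → ℝ) (hv : IsRingNorm v) {I : Type v} (i : I) :
    cA v hv I :=
  ⟨fun j => if j = i then 1 else 0, by
    intro ε hε
    refine (Set.finite_singleton i).subset ?_
    intro j hj
    simp only [Set.mem_setOf_eq] at hj
    simp only [Set.mem_singleton_iff]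
    by_contra hji
    rw [if_neg hji, hv.map_zero] at hj
    exact absurd hj (not_lt.mpr (le_of_lt hε))⟩
/-- A linear map has finite rank if its image is contained in a finitely generated
submodule of the target. -/
def FiniteRank {A : Type u} [Ring A] {M : Type v} {N : Type w} [AddCommGroup M] [Module A M]
    [AddCommGroup N] [Module A N] (f : M →ₗ[A] N) : Prop :=
  ∃ P : Submodule A N, P.FG ∧ LinearMap.range f ≤ P

/-- A continuous linear map is compact if it is a limit, in the operator norm, of
continuous finite rank maps. -/
def IsCompactOp {A : Type u} [Ring A] {M : Type v} {N : Type w} [AddCommGroup M] [Module A M]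
    [AddCommGroup N] [Module A N] (nmM : M → ℝ) (nmN : N → ℝ) (f : M →ₗ[A] N) : Prop :=
  NormContinuous nmM nmN f ∧
  ∀ ε : ℝ, 0 < ε → ∃ g : M →ₗ[A] N, NormContinuous nmM nmN g ∧ FiniteRank g ∧
    ∀ m : M, nmN (f m - g m) ≤ ε * nmM m

/-- The matrix coefficients `a_{i,j}` of a linear map `f : M → N`, with respect to
ON bases of `M` and `N` given by isomorphisms with `c_A(I)` and `c_A(J)`:
`f(e_i) = Σ_j a_{i,j} f_j`. -/
noncomputable def matrixCoef {A : Type u} [Ring A] (v : A → ℝ) (hv : IsRingNorm v)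
    {I : Type v} {J : Type v} {M N : Type v} [AddCommGroup M] [Module A M]
    [AddCommGroup N] [Module A N]
    (TM : M ≃ₗ[A] cA v hv I) (TN : N ≃ₗ[A] cA v hv J)
    (f : M →ₗ[A] N) (i : I) (j : J) : A :=
  ((TN (f (TM.symm (stdDelta v hv i))) : cA v hv J) : J → A) j

/-- The projection of `c_A(I)` onto the coordinates in a finite set `S`. -/
noncomputable def projCA {A : Type u} [Ring A] (v : A → ℝ) (hv : IsRingNorm v) {I : Type v}
    (S : Finset I) : cA v hv I →ₗ[A] cA v hv I where
  toFun f := ⟨fun i => if i ∈ S then (f : I → A) i else 0, by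
    intro ε hε
    refine (f.2 ε hε).subset ?_
    intro i hi
    simp only [Set.mem_setOf_eq] at hi ⊢
    by_cases h : i ∈ S
    · rwa [if_pos h] at hi
    · rw [if_neg h, hv.map_zero] at hi
      exact absurd hi (not_lt.mpr (le_of_lt hε))⟩
  map_add' f g := by
    apply Subtype.ext
    funext i
    by_cases h : i ∈ S <;> simp [h]
  map_smul' a f := by
    apply Subtype.ext
    funext i
    by_cases h : i ∈ S <;> simp [h]

/-- The projection `π_S : M → M` of an ONable Banach module onto the span of the
basis vectors indexed by a finite set `S`. -/
noncomputable def projON {A : Type u} [Ring A] (v : A → ℝ) (hv : IsRingNorm v)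
    {I : Type v} {M : Type v} [AddCommGroup M] [Module A M]
    (T : M ≃ₗ[A] cA v hv I) (S : Finset I) : M →ₗ[A] M :=
  T.symm.toLinearMap ∘ₗ projCA v hv S ∘ₗ T.toLinearMap

/-! ### Auxiliary lemmas -/

section Aux

lemma aux_le_of_forall_le_max {c B : ℝ} (hB : 0 ≤ B)
    (h : ∀ η : ℝ, 0 < η → c ≤ max η B) : c ≤ B := by
  by_contra hc
  push_neg at hc
  have hη : 0 < (B + c) / 2 := by linarith
  have h1 := h _ hη
  have h2 : max ((B + c) / 2) B < c := max_lt (by linarith) hc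
  linarith

lemma aux_nonpos_of_forall_le {c : ℝ} (h : ∀ η : ℝ, 0 < η → c ≤ η) : c ≤ 0 := by
  by_contra hc
  push_neg at hc
  have := h (c / 2) (by linarith)
  linarith

lemma ultra_sum_le {M : Type*} [AddCommGroup M] (nm : M → ℝ) (h0 : nm 0 = 0)
    (hadd : ∀ x y, nm (x + y) ≤ max (nm x) (nm y))
    {κ : Type*} (s : Finset κ) (f : κ → M) {B : ℝ} (hB : 0 ≤ B)
    (h : ∀ k ∈ s, nm (f k) ≤ B) : nm (∑ k ∈ s, f k) ≤ B := by
  induction s using Finset.cons_induction with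
  | empty => simpa [h0]
  | cons a s ha ih =>
    rw [Finset.sum_cons]
    exact le_trans (hadd _ _) (max_le (h a (Finset.mem_cons_self _ _))
      (ih fun k hk => h k (Finset.mem_cons_of_mem hk)))

lemma ultra_sub_le {M : Type*} [AddCommGroup M] (nm : M → ℝ)
    (hneg : ∀ x, nm (-x) = nm x)
    (hadd : ∀ x y, nm (x + y) ≤ max (nm x) (nm y)) (x y : M) :
    nm (x - y) ≤ max (nm x) (nm y) := by
  rw [sub_eq_add_neg]
  simpa [hneg] using hadd x (-y)

lemma ultra_le_max_sub {M : Type*} [AddCommGroup M] (nm : M → ℝ)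
    (hadd : ∀ x y, nm (x + y) ≤ max (nm x) (nm y))
    (x y : M) : nm x ≤ max (nm (x - y)) (nm y) := by
  simpa using hadd (x - y) y

end Aux

section Pi

variable {A : Type u} [Ring A]

lemma IsRingNorm.one_ne_zero' {v : A → ℝ} (hv : IsRingNorm v) : (1 : A) ≠ 0 := by
  intro h
  have h1 := hv.map_one
  rw [h, (hv.eq_zero_iff 0).mpr rfl] at h1
  norm_num at h1

lemma v_pi_pos {v : A → ℝ} (hv : IsRingNorm v) {ϖ : A} (hu : IsUnit ϖ)
    (hmul : ∀ b, v (ϖ * b) = v ϖ * v b) : 0 < v ϖ := by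
  rcases (hv.nonneg ϖ).lt_or_eq with h | h
  · exact h
  · exfalso
    have h1 : ϖ * (↑hu.unit⁻¹ : A) = 1 := hu.mul_val_inv
    have h2 := hmul (↑hu.unit⁻¹ : A)
    rw [h1, hv.map_one, ← h] at h2
    norm_num at h2

lemma v_pi_pow_mul {v : A → ℝ} {ϖ : A} (hmul : ∀ b, v (ϖ * b) = v ϖ * v b) :
    ∀ (t : ℕ) (b : A), v (ϖ ^ t * b) = v ϖ ^ t * v b := by
  intro t
  induction t with
  | zero => intro b; simp
  | succ t ih =>
    intro b
    have : ϖ ^ (t + 1) * b = ϖ ^ t * (ϖ * b) := by rw [pow_succ, mul_assoc]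
    rw [this, ih, hmul, pow_succ]
    ring

lemma v_pi_inv_mul {v : A → ℝ} (hv : IsRingNorm v) {ϖ : A} (hu : IsUnit ϖ)
    (hmul : ∀ b, v (ϖ * b) = v ϖ * v b) :
    ∀ b : A, v ((↑hu.unit⁻¹ : A) * b) = (v ϖ)⁻¹ * v b := by
  intro b
  have h1 : ϖ * ((↑hu.unit⁻¹ : A) * b) = b := by
    rw [← mul_assoc, hu.mul_val_inv, one_mul]
  have h2 := hmul ((↑hu.unit⁻¹ : A) * b)
  rw [h1] at h2
  have hp := (v_pi_pos hv hu hmul).ne'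
  rw [h2]
  field_simp

lemma v_pi_inv_pow_mul {v : A → ℝ} (hv : IsRingNorm v) {ϖ : A} (hu : IsUnit ϖ)
    (hmul : ∀ b, v (ϖ * b) = v ϖ * v b) :
    ∀ (t : ℕ) (b : A), v ((↑hu.unit⁻¹ : A) ^ t * b) = ((v ϖ)⁻¹) ^ t * v b := by
  intro t
  induction t with
  | zero => intro b; simp
  | succ t ih =>
    intro b
    have : (↑hu.unit⁻¹ : A) ^ (t + 1) * b = (↑hu.unit⁻¹ : A) ^ t * ((↑hu.unit⁻¹ : A) * b) := by
      rw [pow_succ, mul_assoc]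
    rw [this, ih, v_pi_inv_mul hv hu hmul, pow_succ]
    ring

lemma v_pi_zpow_mul {v : A → ℝ} (hv : IsRingNorm v) {ϖ : A} (hu : IsUnit ϖ)
    (hmul : ∀ b, v (ϖ * b) = v ϖ * v b) :
    ∀ (k : ℤ) (b : A), v ((↑(hu.unit ^ k) : A) * b) = v ϖ ^ k * v b := by
  intro k b
  cases k with
  | ofNat n =>
    have h1 : ((↑(hu.unit ^ (Int.ofNat n)) : A)) = ϖ ^ n := by
      rw [Int.ofNat_eq_coe, zpow_natCast, Units.val_pow_eq_pow_val, hu.unit_spec]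
    rw [h1, v_pi_pow_mul hmul, Int.ofNat_eq_coe, zpow_natCast]
  | negSucc n =>
    have h1 : ((↑(hu.unit ^ (Int.negSucc n)) : A)) = (↑hu.unit⁻¹ : A) ^ (n + 1) := by
      rw [zpow_negSucc, ← inv_pow, Units.val_pow_eq_pow_val]
    rw [h1, v_pi_inv_pow_mul hv hu hmul, zpow_negSucc, ← inv_pow]

lemma v_pi_zpow {v : A → ℝ} (hv : IsRingNorm v) {ϖ : A} (hu : IsUnit ϖ)
    (hmul : ∀ b, v (ϖ * b) = v ϖ * v b) (k : ℤ) :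
    v ((↑(hu.unit ^ k) : A)) = v ϖ ^ k := by
  have := v_pi_zpow_mul hv hu hmul k 1
  rwa [mul_one, hv.map_one, mul_one] at this

end Pi
section ModNorm

variable {A : Type u} [Ring A]

theorem IsModuleNorm.map_zero' {v : A → ℝ} {M : Type*} [AddCommGroup M] [Module A M]
    {nm : M → ℝ} (h : IsModuleNorm v nm) : nm 0 = 0 := (h.eq_zero_iff 0).mpr rfl

lemma nm_zpow_smul {v : A → ℝ} (hv : IsRingNorm v) {ϖ : A} (hu : IsUnit ϖ)
    (hmul : ∀ b, v (ϖ * b) = v ϖ * v b)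
    {M : Type*} [AddCommGroup M] [Module A M] {nm : M → ℝ} (hnm : IsModuleNorm v nm)
    (k : ℤ) (x : M) : nm ((↑(hu.unit ^ k) : A) • x) = v ϖ ^ k * nm x := by
  have hp := v_pi_pos hv hu hmul
  have hle : ∀ (k : ℤ) (x : M), nm ((↑(hu.unit ^ k) : A) • x) ≤ v ϖ ^ k * nm x := by
    intro k x
    have := hnm.smul_le (↑(hu.unit ^ k) : A) x
    rwa [v_pi_zpow hv hu hmul] at this
  refine le_antisymm (hle k x) ?_
  have h2 := hle (-k) ((↑(hu.unit ^ k) : A) • x)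
  rw [smul_smul, ← Units.val_mul, ← zpow_add, neg_add_cancel, zpow_zero, Units.val_one,
    one_smul] at h2
  have h3 : v ϖ ^ k * nm x ≤ v ϖ ^ k * (v ϖ ^ (-k) * nm ((↑(hu.unit ^ k) : A) • x)) :=
    mul_le_mul_of_nonneg_left h2 (le_of_lt (zpow_pos hp k))
  rw [← mul_assoc, ← zpow_add₀ hp.ne', add_neg_cancel, zpow_zero, one_mul] at h3
  exact h3

lemma nm_pi_smul {v : A → ℝ} (hv : IsRingNorm v) {ϖ : A} (hu : IsUnit ϖ)
    (hmul : ∀ b, v (ϖ * b) = v ϖ * v b)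
    {M : Type*} [AddCommGroup M] [Module A M] {nm : M → ℝ} (hnm : IsModuleNorm v nm)
    (x : M) : nm (ϖ • x) = v ϖ * nm x := by
  have := nm_zpow_smul hv hu hmul hnm 1 x
  rwa [zpow_one, hu.unit_spec, zpow_one] at this

/-- The window lemma: scale any nonzero element into `[δ * v ϖ, δ)`. -/
lemma exists_zpow_window {v : A → ℝ} (hv : IsRingNorm v) {ϖ : A} (hu : IsUnit ϖ)
    (h1 : v ϖ < 1) (hmul : ∀ b, v (ϖ * b) = v ϖ * v b) {δ r : ℝ} (hδ : 0 < δ) (hr : 0 < r) :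
    ∃ k : ℤ, δ * v ϖ ≤ v ϖ ^ k * r ∧ v ϖ ^ k * r < δ := by
  have hp := v_pi_pos hv hu hmul
  have hy : 1 < (v ϖ)⁻¹ := (one_lt_inv₀ hp).mpr h1
  obtain ⟨n, hn1, hn2⟩ := exists_mem_Ioc_zpow (div_pos hδ hr) hy
  refine ⟨-n, ?_, ?_⟩
  · have h2 : v ϖ * (δ / r) ≤ v ϖ * ((v ϖ)⁻¹ ^ (n + 1)) := by
      apply mul_le_mul_of_nonneg_left hn2 hp.le
    rw [inv_zpow, ← zpow_neg] at h2
    have h3 : v ϖ * (v ϖ) ^ (-(n + 1)) = v ϖ ^ (-n) := by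
      rw [← zpow_one_add₀ hp.ne']
      congr 1
      ring
    rw [h3] at h2
    calc δ * v ϖ = (v ϖ * (δ / r)) * r := by field_simp
      _ ≤ v ϖ ^ (-n) * r := mul_le_mul_of_nonneg_right h2 hr.le
  · have h2 : v ϖ ^ (-n) = (v ϖ)⁻¹ ^ n := by rw [inv_zpow, zpow_neg]
    have h4 : v ϖ ^ (-n) < δ / r := by rw [h2]; exact hn1
    calc v ϖ ^ (-n) * r < (δ / r) * r := mul_lt_mul_of_pos_right h4 hr
      _ = δ := by field_simp

end ModNorm
section Bounded

variable {A : Type u} [Ring A]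

lemma normContinuous_of_bounded {v : A → ℝ}
    {M N : Type*} [AddCommGroup M] [Module A M] [AddCommGroup N] [Module A N]
    {nmM : M → ℝ} {nmN : N → ℝ}
    (f : M →ₗ[A] N) {C : ℝ} (hC : 0 < C) (hb : ∀ x, nmN (f x) ≤ C * nmM x) :
    NormContinuous nmM nmN f := by
  intro m ε hε
  refine ⟨ε / C, div_pos hε hC, fun m' hm' => ?_⟩
  have : f m' - f m = f (m' - m) := by rw [map_sub]
  rw [this]
  calc nmN (f (m' - m)) ≤ C * nmM (m' - m) := hb _
    _ < C * (ε / C) := by apply mul_lt_mul_of_pos_left hm' hC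
    _ = ε := by field_simp

lemma bounded_of_normContinuous {v : A → ℝ} (hv : IsRingNorm v) {ϖ : A} (hu : IsUnit ϖ)
    (h1 : v ϖ < 1) (hmul : ∀ b, v (ϖ * b) = v ϖ * v b)
    {M N : Type*} [AddCommGroup M] [Module A M] [AddCommGroup N] [Module A N]
    {nmM : M → ℝ} (hnmM : IsModuleNorm v nmM) {nmN : N → ℝ} (hnmN : IsModuleNorm v nmN)
    (f : M →ₗ[A] N) (hf : NormContinuous nmM nmN f) :
    ∃ C : ℝ, 0 < C ∧ ∀ x, nmN (f x) ≤ C * nmM x := by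
  have hp := v_pi_pos hv hu hmul
  obtain ⟨δ, hδ, hδ'⟩ := hf 0 1 one_pos
  simp only [sub_zero, map_zero] at hδ'
  refine ⟨(δ * v ϖ)⁻¹, inv_pos.mpr (mul_pos hδ hp), fun x => ?_⟩
  rcases eq_or_ne x 0 with rfl | hx
  · rw [map_zero, hnmN.map_zero', hnmM.map_zero', mul_zero]
  · have hxpos : 0 < nmM x := by
      rcases (hnmM.nonneg x).lt_or_eq with h | h
      · exact h
      · exact absurd ((hnmM.eq_zero_iff x).mp h.symm) hx
    obtain ⟨k, hk1, hk2⟩ := exists_zpow_window hv hu h1 hmul hδ hxpos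
    have hy : nmM ((↑(hu.unit ^ k) : A) • x) < δ := by
      rw [nm_zpow_smul hv hu hmul hnmM]; exact hk2
    have hfy := hδ' _ hy
    have hfx : nmN (f ((↑(hu.unit ^ k) : A) • x)) = v ϖ ^ k * nmN (f x) := by
      rw [map_smul, nm_zpow_smul hv hu hmul hnmN]
    rw [hfx] at hfy
    have hkpos : (0:ℝ) < v ϖ ^ k := zpow_pos hp k
    rw [inv_mul_eq_div, le_div_iff₀ (mul_pos hδ hp)]
    nlinarith [hnmN.nonneg (f x), hnmM.nonneg x]

end Bounded
section CNorm

variable {A : Type u} [Ring A] {v : A → ℝ}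

lemma cA_bddAbove {hv : IsRingNorm v} {I : Type v} (f : cA v hv I) :
    BddAbove (Set.range fun i => v ((f : I → A) i)) := by
  classical
  set S := (f.2 1 one_pos).toFinset with hS
  refine ⟨1 + ∑ i ∈ S, v ((f : I → A) i), ?_⟩
  rintro x ⟨i, rfl⟩
  by_cases hi : i ∈ S
  · have h1 : v ((f : I → A) i) ≤ ∑ i ∈ S, v ((f : I → A) i) :=
      Finset.single_le_sum (fun j _ => hv.nonneg _) hi
    linarith
  · have h2 : ¬ (1 : ℝ) < v ((f : I → A) i) := by
      intro h
      exact hi ((f.2 1 one_pos).mem_toFinset.mpr h)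
    push_neg at h2
    have h3 : (0:ℝ) ≤ ∑ i ∈ S, v ((f : I → A) i) :=
      Finset.sum_nonneg fun j _ => hv.nonneg _
    linarith

lemma le_cNorm {hv : IsRingNorm v} {I : Type v} (f : cA v hv I) (i : I) :
    v ((f : I → A) i) ≤ cNorm v f :=
  le_ciSup (cA_bddAbove f) i

lemma cNorm_le {hv : IsRingNorm v} {I : Type v} (f : cA v hv I) {B : ℝ} (hB : 0 ≤ B)
    (h : ∀ i, v ((f : I → A) i) ≤ B) : cNorm v f ≤ B :=
  Real.iSup_le h hB

lemma cNorm_nonneg {hv : IsRingNorm v} {I : Type v} (f : cA v hv I) : 0 ≤ cNorm v f :=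
  Real.iSup_nonneg fun i => hv.nonneg _

lemma cNorm_stdDelta_le_one {hv : IsRingNorm v} {I : Type v} (i : I) :
    cNorm v (stdDelta v hv i) ≤ 1 := by
  apply cNorm_le _ zero_le_one
  intro j
  show v (if j = i then 1 else 0) ≤ 1
  split
  · rw [hv.map_one]
  · rw [hv.map_zero]; exact zero_le_one

/-- The tail of `f` outside a suitable finite set is small. -/
lemma exists_tail_small {hv : IsRingNorm v} {I : Type v} (f : cA v hv I) {η : ℝ} (hη : 0 < η) :
    ∃ S : Finset I, cNorm v (f - projCA v hv S f) ≤ η / 2 := by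
  classical
  refine ⟨(f.2 (η/2) (by linarith)).toFinset, cNorm_le _ (by linarith) fun i => ?_⟩
  have hcoord : ((f - projCA v hv (f.2 (η/2) (by linarith)).toFinset f : cA v hv I) : I → A) i
      = (f : I → A) i - (if i ∈ (f.2 (η/2) (by linarith)).toFinset then (f : I → A) i else 0) := rfl
  rw [hcoord]
  by_cases hi : i ∈ (f.2 (η/2) (by linarith)).toFinset
  · rw [if_pos hi, sub_self, hv.map_zero]; linarith
  · rw [if_neg hi, sub_zero]
    have := hi
    rw [Set.Finite.mem_toFinset, Set.mem_setOf_eq, not_lt] at this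
    exact this

lemma coe_sum_apply {hv : IsRingNorm v} {I : Type v} {κ : Type*} (g : κ → cA v hv I)
    (s : Finset κ) (j : I) :
    ((∑ k ∈ s, g k : cA v hv I) : I → A) j = ∑ k ∈ s, ((g k : I → A) j) := by
  induction s using Finset.cons_induction with
  | empty => rfl
  | cons a s ha ih => rw [Finset.sum_cons, Finset.sum_cons, ← ih]; rfl

/-- `projCA` as a finite sum of scaled basis vectors. -/
lemma projCA_eq_sum {hv : IsRingNorm v} {I : Type v} (S : Finset I) (f : cA v hv I) :
    projCA v hv S f = ∑ i ∈ S, ((f : I → A) i) • stdDelta v hv i := by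
  classical
  apply Subtype.ext
  funext j
  show (if j ∈ S then (f : I → A) j else 0) = _
  rw [coe_sum_apply]
  have hterm : ∀ i, (((((f : I → A) i) • stdDelta v hv i : cA v hv I)) : I → A) j
      = if j = i then (f : I → A) i else 0 := by
    intro i
    show ((f : I → A) i) * (if j = i then 1 else 0) = _
    rw [mul_ite, mul_one, mul_zero]
  simp only [hterm]
  rw [Finset.sum_ite_eq S j (fun i => (f : I → A) i)]

end CNorm
section Baire

lemma baire_norm {M : Type*} [AddCommGroup M] (nm : M → ℝ)
    (h0 : nm 0 = 0) (hneg : ∀ x, nm (-x) = nm x)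
    (hadd : ∀ x y, nm (x + y) ≤ max (nm x) (nm y))
    (hcomp : NormComplete nm) (F : ℕ → Set M)
    (hcover : ∀ x : M, ∃ t : ℕ, ∀ η : ℝ, 0 < η → ∃ w ∈ F t, nm (x - w) < η) :
    ∃ (t : ℕ) (x₀ : M) (δ : ℝ), 0 < δ ∧
      ∀ x : M, nm (x - x₀) < δ → ∀ η : ℝ, 0 < η → ∃ w ∈ F t, nm (x - w) < η := by
  classical
  by_contra hcon
  push_neg at hcon
  -- hcon : ∀ t x₀ δ, 0 < δ → ∃ x, nm (x - x₀) < δ ∧ ∃ η, 0 < η ∧ ∀ w ∈ F t, ¬ nm (x - w) < η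
  have key : ∀ (t : ℕ) (p : M × ℝ), ∃ q : M × ℝ, 0 < p.2 →
      0 < q.2 ∧ q.2 ≤ p.2 ∧ q.2 ≤ (1/2)^t ∧ nm (q.1 - p.1) < p.2 ∧
        ∀ w ∈ F t, q.2 ≤ nm (q.1 - w) := by
    intro t p
    by_cases hp : 0 < p.2
    · obtain ⟨x, hx, η, hη, hw⟩ := hcon t p.1 p.2 hp
      refine ⟨(x, min η (min p.2 ((1/2)^t))), fun _ => ⟨?_, ?_, ?_, hx, fun w hwF => ?_⟩⟩
      · positivity
      · exact le_trans (min_le_right _ _) (min_le_left _ _)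
      · exact le_trans (min_le_right _ _) (min_le_right _ _)
      · exact le_trans (min_le_left _ _) (hw w hwF)
    · exact ⟨p, fun h => absurd h hp⟩
  choose step hstep using key
  let seq : ℕ → M × ℝ := fun t => Nat.rec ((0 : M), (1 : ℝ)) (fun t ih => step t ih) t
  have hseqS : ∀ t, seq (t+1) = step t (seq t) := fun t => rfl
  have hpos : ∀ t, 0 < (seq t).2 := by
    intro t
    induction t with
    | zero => exact one_pos
    | succ t ih => rw [hseqS]; exact (hstep t (seq t) ih).1
  have hP := fun t => hstep t (seq t) (hpos t)
  have hmono : ∀ t s, t ≤ s → (seq s).2 ≤ (seq t).2 := by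
    intro t s hts
    induction s with
    | zero => have h0' : t = 0 := Nat.le_zero.mp hts; subst h0'; rfl
    | succ s ih =>
      rcases Nat.lt_or_ge t (s+1) with h | h
      · have h1 := (hP s).2.1
        rw [← hseqS] at h1
        exact le_trans h1 (ih (Nat.lt_succ_iff.mp h))
      · have : t = s + 1 := le_antisymm hts h
        subst this; rfl
  have hchain : ∀ t s, t ≤ s → nm ((seq s).1 - (seq t).1) < (seq t).2 := by
    intro t s hts
    induction s with
    | zero =>
      have : t = 0 := Nat.le_zero.mp hts
      subst this; simpa [h0] using hpos 0
    | succ s ih =>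
      rcases Nat.lt_or_ge t (s+1) with h | h
      · have hts' : t ≤ s := Nat.lt_succ_iff.mp h
        have h1 : nm ((seq (s+1)).1 - (seq t).1)
            ≤ max (nm ((seq (s+1)).1 - (seq s).1)) (nm ((seq s).1 - (seq t).1)) := by
          have := hadd ((seq (s+1)).1 - (seq s).1) ((seq s).1 - (seq t).1)
          simpa [sub_add_sub_cancel] using this
        have h2 : nm ((seq (s+1)).1 - (seq s).1) < (seq s).2 := by
          have := (hP s).2.2.2.1
          rwa [← hseqS] at this
        have h3 := ih hts'
        calc nm ((seq (s+1)).1 - (seq t).1) ≤ _ := h1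
          _ < (seq t).2 := max_lt (lt_of_lt_of_le h2 (hmono t s hts')) h3
      · have : t = s + 1 := le_antisymm hts h
        subst this; simpa [h0] using hpos (s+1)
  have hhalf : ∀ t, (seq (t+1)).2 ≤ (1/2)^t := by
    intro t
    have := (hP t).2.2.1
    rwa [← hseqS] at this
  have hcauchy : NormCauchy nm (fun t => (seq t).1) := by
    intro ε hε
    obtain ⟨T, hT⟩ := exists_pow_lt_of_lt_one hε (by norm_num : (1:ℝ)/2 < 1)
    refine ⟨T + 1, fun i j hi hj => ?_⟩
    have hbnd : ∀ s, T + 1 ≤ s → nm ((seq s).1 - (seq (T+1)).1) < ε := by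
      intro s hs
      calc nm ((seq s).1 - (seq (T+1)).1) < (seq (T+1)).2 := hchain (T+1) s hs
        _ ≤ (1/2)^T := hhalf T
        _ < ε := hT
    have h1 := hbnd i hi
    have h2 := hbnd j hj
    have h3 : nm ((seq i).1 - (seq j).1)
        ≤ max (nm ((seq i).1 - (seq (T+1)).1)) (nm ((seq (T+1)).1 - (seq j).1)) := by
      have := hadd ((seq i).1 - (seq (T+1)).1) ((seq (T+1)).1 - (seq j).1)
      simpa [sub_add_sub_cancel] using this
    have h4 : nm ((seq (T+1)).1 - (seq j).1) < ε := by
      rw [← hneg, neg_sub]; exact h2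
    exact lt_of_le_of_lt h3 (max_lt h1 h4)
  obtain ⟨x, hx⟩ := hcomp _ hcauchy
  have hxt : ∀ t, nm (x - (seq (t+1)).1) < (seq (t+1)).2 := by
    intro t
    obtain ⟨T, hT⟩ := hx ((seq (t+1)).2) (hpos (t+1))
    set s := max T (t+1) with hs
    have h1 : nm ((seq s).1 - x) < (seq (t+1)).2 := hT s (le_max_left _ _)
    have h2 : nm ((seq s).1 - (seq (t+1)).1) < (seq (t+1)).2 := hchain (t+1) s (le_max_right _ _)
    have h3 : nm (x - (seq (t+1)).1)
        ≤ max (nm (x - (seq s).1)) (nm ((seq s).1 - (seq (t+1)).1)) := by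
      have := hadd (x - (seq s).1) ((seq s).1 - (seq (t+1)).1)
      simpa [sub_add_sub_cancel] using this
    have h4 : nm (x - (seq s).1) < (seq (t+1)).2 := by rw [← hneg, neg_sub]; exact h1
    exact lt_of_le_of_lt h3 (max_lt h4 h2)
  obtain ⟨t, ht⟩ := hcover x
  obtain ⟨w, hwF, hw⟩ := ht ((seq (t+1)).2) (hpos (t+1))
  have h5 : (seq (t+1)).2 ≤ nm ((seq (t+1)).1 - w) := by
    have := (hP t).2.2.2.2 w hwF
    rwa [← hseqS] at this
  have h6 : nm ((seq (t+1)).1 - w)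
      ≤ max (nm ((seq (t+1)).1 - x)) (nm (x - w)) := by
    have := hadd ((seq (t+1)).1 - x) (x - w)
    simpa [sub_add_sub_cancel] using this
  have h7 : nm ((seq (t+1)).1 - x) < (seq (t+1)).2 := by
    rw [← hneg, neg_sub]; exact hxt t
  have := lt_of_le_of_lt h6 (max_lt h7 hw)
  exact absurd h5 (not_le.mpr this)

end Baire
section BoundedGen

lemma bounded_generation {A : Type u} [Ring A] {v : A → ℝ} (hv : IsRingNorm v)
    (hAc : NormComplete v) {ϖ : A} (hu : IsUnit ϖ) (h1 : v ϖ < 1)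
    (hmul : ∀ b, v (ϖ * b) = v ϖ * v b)
    {M N : Type*} [AddCommGroup M] [Module A M] [AddCommGroup N] [Module A N]
    {nmM : M → ℝ} (hnmM : IsModuleNorm v nmM) (hMc : NormComplete nmM)
    {nmN : N → ℝ} (hnmN : IsModuleNorm v nmN)
    (g : M →ₗ[A] N) {Cg : ℝ} (hCg : 0 < Cg) (hgb : ∀ x, nmN (g x) ≤ Cg * nmM x)
    (p : Finset N) (hrange : ∀ x : M, g x ∈ Submodule.span A (↑p : Set N)) :
    ∃ C : ℝ, 0 < C ∧ ∀ x : M, ∃ c : N → A,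
      g x = ∑ q ∈ p, c q • q ∧ ∀ q ∈ p, v (c q) ≤ C * nmM x := by
  classical
  have hp := v_pi_pos hv hu hmul
  have hy : 1 < (v ϖ)⁻¹ := (one_lt_inv₀ hp).mpr h1
  set F : ℕ → Set M := fun t => {x | ∃ c : N → A,
    (∑ q ∈ p, c q • q) = g x ∧ ∀ q ∈ p, v (c q) ≤ ((v ϖ)⁻¹)^t} with hF
  -- the cover
  have hcover : ∀ x : M, ∃ t : ℕ, ∀ η : ℝ, 0 < η → ∃ w ∈ F t, nmM (x - w) < η := by
    intro x
    obtain ⟨c, -, hc⟩ := Submodule.mem_span_finset.mp (hrange x)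
    set B : ℝ := ∑ q ∈ p, v (c q) with hB
    obtain ⟨t, ht⟩ := pow_unbounded_of_one_lt B hy
    refine ⟨t, fun η hη => ⟨x, ⟨c, hc, fun q hq => ?_⟩, by simpa [hnmM.map_zero'] using hη⟩⟩
    calc v (c q) ≤ B := Finset.single_le_sum (fun r _ => hv.nonneg (c r)) hq
      _ ≤ ((v ϖ)⁻¹)^t := ht.le
  obtain ⟨t₀, x₀, δ, hδ, hball⟩ := baire_norm nmM hnmM.map_zero' hnmM.map_neg
    hnmM.add_le hMc F hcover
  set R : ℝ := ((v ϖ)⁻¹)^t₀ with hR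
  have hRpos : 0 < R := pow_pos (inv_pos.mpr hp) t₀
  -- approximation of small elements by F t₀
  have happrox : ∀ x : M, nmM x < δ → ∀ η : ℝ, 0 < η → ∃ w ∈ F t₀, nmM (x - w) < η := by
    intro x hx η hη
    obtain ⟨w₁, hw₁F, hw₁⟩ := hball x₀ (by simpa [hnmM.map_zero'] using hδ) η hη
    obtain ⟨w₂, hw₂F, hw₂⟩ := hball (x₀ + x) (by simpa using hx) η hη
    obtain ⟨c₁, hc₁, hb₁⟩ := hw₁F
    obtain ⟨c₂, hc₂, hb₂⟩ := hw₂F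
    refine ⟨w₂ - w₁, ⟨fun q => c₂ q - c₁ q, ?_, fun q hq => ?_⟩, ?_⟩
    · rw [map_sub, ← hc₁, ← hc₂, ← Finset.sum_sub_distrib]
      exact Finset.sum_congr rfl fun q _ => (sub_smul _ _ _)
    · exact le_trans (ultra_sub_le v hv.map_neg hv.add_le _ _) (max_le (hb₂ q hq) (hb₁ q hq))
    · have hrw : x - (w₂ - w₁) = (x₀ + x - w₂) - (x₀ - w₁) := by abel
      rw [hrw]
      exact lt_of_le_of_lt (ultra_sub_le nmM hnmM.map_neg hnmM.add_le _ _) (max_lt hw₂ hw₁)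
  -- single division step
  have hstep : ∀ x : M, ∃ (w x' : M) (c : N → A), nmM x < δ →
      ((∑ q ∈ p, c q • q) = g w ∧ (∀ q ∈ p, v (c q) ≤ R) ∧ nmM x' < δ ∧ x = w + ϖ • x') := by
    intro x
    by_cases hx : nmM x < δ
    · obtain ⟨w, hwF, hw⟩ := happrox x hx (δ * v ϖ) (mul_pos hδ hp)
      obtain ⟨c, hc, hb⟩ := hwF
      refine ⟨w, (↑hu.unit⁻¹ : A) • (x - w), c, fun _ => ⟨hc, hb, ?_, ?_⟩⟩
      · have hz : ((↑hu.unit⁻¹ : A)) = (↑(hu.unit ^ (-1 : ℤ)) : A) := by rw [zpow_neg_one]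
        rw [hz, nm_zpow_smul hv hu hmul hnmM, zpow_neg_one]
        calc (v ϖ)⁻¹ * nmM (x - w) < (v ϖ)⁻¹ * (δ * v ϖ) := by
              exact mul_lt_mul_of_pos_left hw (inv_pos.mpr hp)
          _ = δ := by field_simp
      · have hone : ϖ * (↑hu.unit⁻¹ : A) = 1 := hu.mul_val_inv
        rw [smul_smul, hone, one_smul]
        abel
    · exact ⟨0, 0, 0, fun h => absurd h hx⟩
  choose W X' Cf hstep' using hstep
  -- main claim for small elements
  have main : ∀ x : M, nmM x < δ → ∃ c : N → A,
      g x = ∑ q ∈ p, c q • q ∧ ∀ q ∈ p, v (c q) ≤ R := by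
    intro x hx
    set seq : ℕ → M := fun k => Nat.rec x (fun _ ih => X' ih) k with hseqdef
    have hseqS : ∀ k, seq (k+1) = X' (seq k) := fun k => rfl
    have hsd : ∀ k, nmM (seq k) < δ := by
      intro k
      induction k with
      | zero => exact hx
      | succ k ih => rw [hseqS]; exact ((hstep' (seq k) ih).2.2.1)
    have hPk := fun k => hstep' (seq k) (hsd k)
    -- telescoping
    have htel : ∀ T : ℕ, x = (∑ t ∈ Finset.range T, ϖ^t • W (seq t)) + ϖ^T • seq T := by
      intro T
      induction T with
      | zero => simp; rfl
      | succ T ih =>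
        rw [Finset.sum_range_succ]
        have hT := (hPk T).2.2.2
        calc x = (∑ t ∈ Finset.range T, ϖ^t • W (seq t)) + ϖ^T • seq T := ih
          _ = (∑ t ∈ Finset.range T, ϖ^t • W (seq t)) + (ϖ^T • W (seq T) + ϖ^(T+1) • seq (T+1)) := by
              rw [← hseqS T] at hT
              nth_rewrite 1 [hT]
              rw [smul_add, smul_smul, ← pow_succ]
          _ = _ := by abel
    -- coefficient partial sums
    set s : N → ℕ → A := fun q T => ∑ t ∈ Finset.range T, ϖ^t * Cf (seq t) q with hs
    have hterm : ∀ (q : N), q ∈ p → ∀ t, v (ϖ^t * Cf (seq t) q) ≤ v ϖ ^ t * R := by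
      intro q hq t
      rw [v_pi_pow_mul hmul]
      exact mul_le_mul_of_nonneg_left ((hPk t).2.1 q hq) (pow_nonneg hp.le t)
    have hsbound : ∀ (q : N), q ∈ p → ∀ T, v (s q T) ≤ R := by
      intro q hq T
      apply ultra_sum_le v hv.map_zero hv.add_le _ _ hRpos.le
      intro t _
      calc v (ϖ^t * Cf (seq t) q) ≤ v ϖ ^ t * R := hterm q hq t
        _ ≤ 1 * R := by
            apply mul_le_mul_of_nonneg_right (pow_le_one₀ hp.le h1.le) hRpos.le
        _ = R := one_mul R
    have hcauchy : ∀ q : N, q ∈ p → NormCauchy v (s q) := by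
      intro q hq ε hε
      obtain ⟨T₀, hT₀⟩ := exists_pow_lt_of_lt_one (div_pos hε hRpos) h1
      refine ⟨T₀, fun i j hi hj => ?_⟩
      have hkey : ∀ i j : ℕ, T₀ ≤ i → T₀ ≤ j → j ≤ i → v (s q i - s q j) < ε := by
        intro i j hi hj hji
        rw [hs]
        simp only
        rw [← Finset.sum_Ico_eq_sub _ hji]
        have : v (∑ t ∈ Finset.Ico j i, ϖ^t * Cf (seq t) q) ≤ v ϖ ^ T₀ * R := by
          apply ultra_sum_le v hv.map_zero hv.add_le _ _
            (mul_nonneg (pow_nonneg hp.le T₀) hRpos.le)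
          intro t ht
          have htT : T₀ ≤ t := le_trans hj (Finset.mem_Ico.mp ht).1
          calc v (ϖ^t * Cf (seq t) q) ≤ v ϖ ^ t * R := hterm q hq t
            _ ≤ v ϖ ^ T₀ * R := by
                apply mul_le_mul_of_nonneg_right
                  (pow_le_pow_of_le_one hp.le h1.le htT) hRpos.le
        calc v (∑ t ∈ Finset.Ico j i, ϖ^t * Cf (seq t) q) ≤ v ϖ ^ T₀ * R := this
          _ < ε := by
              rw [← lt_div_iff₀ hRpos]
              exact hT₀
      rcases le_total j i with h | h
      · exact hkey i j hi hj h
      · have := hkey j i hj hi h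
        rwa [← hv.map_neg, neg_sub] at this
    have hlim : ∀ q : N, ∃ cq : A, q ∈ p → NormLim v (s q) cq := by
      intro q
      by_cases hq : q ∈ p
      · obtain ⟨cq, hcq⟩ := hAc (s q) (hcauchy q hq)
        exact ⟨cq, fun _ => hcq⟩
      · exact ⟨0, fun h => absurd h hq⟩
    choose clim hclim using hlim
    have hvpow : ∀ T : ℕ, v (ϖ^T) = v ϖ ^ T := by
      intro T
      have := v_pi_pow_mul hmul T 1
      rwa [mul_one, hv.map_one, mul_one] at this
    have hswap : ∀ T, (∑ t ∈ Finset.range T, ϖ^t • g (W (seq t))) = ∑ q ∈ p, s q T • q := by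
      intro T
      calc ∑ t ∈ Finset.range T, ϖ^t • g (W (seq t))
          = ∑ t ∈ Finset.range T, ∑ q ∈ p, (ϖ^t * Cf (seq t) q) • q := by
            refine Finset.sum_congr rfl fun t _ => ?_
            rw [← (hPk t).1, Finset.smul_sum]
            exact Finset.sum_congr rfl fun q _ => smul_smul _ _ _
        _ = ∑ q ∈ p, ∑ t ∈ Finset.range T, (ϖ^t * Cf (seq t) q) • q := Finset.sum_comm
        _ = ∑ q ∈ p, s q T • q := by
            refine Finset.sum_congr rfl fun q _ => ?_
            rw [← Finset.sum_smul]
    have hgx : ∀ T : ℕ, g x = (∑ q ∈ p, s q T • q) + ϖ^T • g (seq T) := by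
      intro T
      rw [htel T, map_add, map_smul, map_sum]
      simp only [map_smul]
      rw [hswap T]
    refine ⟨clim, ?_, ?_⟩
    · -- the equality g x = ∑ clim q • q
      have hzero : nmN (g x - ∑ q ∈ p, clim q • q) ≤ 0 := by
        apply aux_nonpos_of_forall_le
        intro η hη
        set Bq : ℝ := 1 + ∑ q ∈ p, nmN q with hBq
        have hsum_nonneg : 0 ≤ ∑ q ∈ p, nmN q := Finset.sum_nonneg fun q _ => hnmN.nonneg q
        have hBqpos : 0 < Bq := by rw [hBq]; linarith
        have hBqle : ∀ q ∈ p, nmN q ≤ Bq := by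
          intro q hq
          have := Finset.single_le_sum (fun r _ => hnmN.nonneg r) hq
          rw [hBq]; linarith
        obtain ⟨T₂, hT₂⟩ := exists_pow_lt_of_lt_one (div_pos hη (mul_pos hCg hδ)) h1
        have hTqex : ∀ q : N, ∃ Tq : ℕ, q ∈ p → ∀ T, Tq ≤ T → v (s q T - clim q) < η / Bq := by
          intro q
          by_cases hq : q ∈ p
          · obtain ⟨Tq, hTq⟩ := hclim q hq (η / Bq) (div_pos hη hBqpos)
            exact ⟨Tq, fun _ T hT => hTq T hT⟩
          · exact ⟨0, fun h => absurd h hq⟩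
        choose Tq hTq' using hTqex
        set T := max T₂ (p.sup Tq) with hT
        have hdec : g x - ∑ q ∈ p, clim q • q
            = ϖ^T • g (seq T) + ∑ q ∈ p, (s q T - clim q) • q := by
          rw [hgx T]
          calc (∑ q ∈ p, s q T • q) + ϖ^T • g (seq T) - ∑ q ∈ p, clim q • q
              = ϖ^T • g (seq T) + ∑ q ∈ p, (s q T • q - clim q • q) := by
                rw [Finset.sum_sub_distrib]; abel
            _ = ϖ^T • g (seq T) + ∑ q ∈ p, (s q T - clim q) • q := by
                congr 1
                exact Finset.sum_congr rfl fun q _ => (sub_smul _ _ _).symm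
        rw [hdec]
        have hb1 : nmN (ϖ^T • g (seq T)) ≤ η := by
          have hgT : nmN (g (seq T)) ≤ Cg * δ :=
            le_trans (hgb _) (mul_le_mul_of_nonneg_left (hsd T).le hCg.le)
          have hd := (lt_div_iff₀ (mul_pos hCg hδ)).mp hT₂
          calc nmN (ϖ^T • g (seq T)) ≤ v (ϖ^T) * nmN (g (seq T)) := hnmN.smul_le _ _
            _ = v ϖ ^ T * nmN (g (seq T)) := by rw [hvpow]
            _ ≤ v ϖ ^ T * (Cg * δ) := by
                apply mul_le_mul_of_nonneg_left hgT (pow_nonneg hp.le T)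
            _ ≤ v ϖ ^ T₂ * (Cg * δ) := by
                apply mul_le_mul_of_nonneg_right
                  (pow_le_pow_of_le_one hp.le h1.le (le_max_left _ _)) (by positivity)
            _ ≤ η := hd.le
        have hb2 : nmN (∑ q ∈ p, (s q T - clim q) • q) ≤ η := by
          apply ultra_sum_le nmN hnmN.map_zero' hnmN.add_le _ _ hη.le
          intro q hq
          have hTle : Tq q ≤ T := le_trans (Finset.le_sup hq) (le_max_right _ _)
          calc nmN ((s q T - clim q) • q) ≤ v (s q T - clim q) * nmN q := hnmN.smul_le _ _
            _ ≤ (η / Bq) * Bq :=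
                mul_le_mul (hTq' q hq T hTle).le (hBqle q hq) (hnmN.nonneg q) (by positivity)
            _ = η := div_mul_cancel₀ η hBqpos.ne'
        exact le_trans (hnmN.add_le _ _) (max_le hb1 hb2)
      have hzero' : nmN (g x - ∑ q ∈ p, clim q • q) = 0 :=
        le_antisymm hzero (hnmN.nonneg _)
      exact sub_eq_zero.mp ((hnmN.eq_zero_iff _).mp hzero')
    · -- the bound
      intro q hq
      apply aux_le_of_forall_le_max hRpos.le
      intro η hη
      obtain ⟨T₁, hT₁⟩ := hclim q hq η hη
      have h2 : v (clim q) ≤ max (v (clim q - s q T₁)) (v (s q T₁)) :=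
        ultra_le_max_sub v hv.add_le _ _
      have h3 : v (clim q - s q T₁) < η := by
        rw [← hv.map_neg, neg_sub]
        exact hT₁ T₁ le_rfl
      exact le_trans h2 (max_le (le_max_of_le_left h3.le)
        (le_max_of_le_right (hsbound q hq T₁)))
  -- global scaling
  refine ⟨R / (δ * v ϖ), by positivity, fun x => ?_⟩
  rcases eq_or_ne x 0 with rfl | hx
  · refine ⟨0, by simp, fun q hq => ?_⟩
    rw [Pi.zero_apply, hv.map_zero, hnmM.map_zero', mul_zero]
  · have hxpos : 0 < nmM x := by
      rcases (hnmM.nonneg x).lt_or_eq with h | h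
      · exact h
      · exact absurd ((hnmM.eq_zero_iff x).mp h.symm) hx
    obtain ⟨k, hk1, hk2⟩ := exists_zpow_window hv hu h1 hmul hδ hxpos
    have hsm : nmM ((↑(hu.unit ^ k) : A) • x) < δ := by
      rw [nm_zpow_smul hv hu hmul hnmM]; exact hk2
    obtain ⟨c', hc', hb'⟩ := main _ hsm
    refine ⟨fun q => (↑(hu.unit ^ (-k)) : A) * c' q, ?_, ?_⟩
    · have h2 : g ((↑(hu.unit ^ k) : A) • x) = (↑(hu.unit ^ k) : A) • g x := map_smul g _ x
      have h3 : (↑(hu.unit ^ (-k)) : A) • ((↑(hu.unit ^ k) : A) • g x) = g x := by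
        rw [smul_smul, ← Units.val_mul, ← zpow_add, neg_add_cancel, zpow_zero, Units.val_one,
          one_smul]
      calc g x = (↑(hu.unit ^ (-k)) : A) • g ((↑(hu.unit ^ k) : A) • x) := by rw [h2, h3]
        _ = (↑(hu.unit ^ (-k)) : A) • ∑ q ∈ p, c' q • q := by rw [hc']
        _ = ∑ q ∈ p, ((↑(hu.unit ^ (-k)) : A) * c' q) • q := by
            rw [Finset.smul_sum]
            exact Finset.sum_congr rfl fun q _ => smul_smul _ _ _
    · intro q hq
      rw [v_pi_zpow_mul hv hu hmul]
      have hkpos : (0:ℝ) < v ϖ ^ k := zpow_pos hp k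
      have hinvle : v ϖ ^ (-k) ≤ nmM x / (δ * v ϖ) := by
        rw [zpow_neg, inv_eq_one_div, div_le_div_iff₀ hkpos (mul_pos hδ hp), one_mul,
          mul_comm (nmM x)]
        exact hk1
      calc v ϖ ^ (-k) * v (c' q)
          ≤ (nmM x / (δ * v ϖ)) * R := by
            apply mul_le_mul hinvle (hb' q hq) (hv.nonneg _) (by positivity)
        _ = R / (δ * v ϖ) * nmM x := by ring

end BoundedGen
/-- A continuous linear map `φ : M → N` of ONable Banach modules over a
noetherian Banach–Tate ring, with matrix `(a_{i,j})`, is compact if and only if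
`lim_{j→∞} sup_{i∈I} |a_{i,j}| = 0`, i.e. for every `ε > 0` only finitely many `j`
satisfy `sup_i |a_{i,j}| > ε`. -/
theorem isCompactOp_iff_matrix_sup_tendsto_zero
    {A : Type u} [Ring A] (v : A → ℝ) (hA : IsBanachTate v)
    (hnoeth : IsNoetherianRing A)
    {M N : Type u} [AddCommGroup M] [Module A M] [AddCommGroup N] [Module A N]
    (nmM : M → ℝ) (hnmM : IsModuleNorm v nmM) (hcompM : NormComplete nmM)
    (nmN : N → ℝ) (hnmN : IsModuleNorm v nmN) (hcompN : NormComplete nmN)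
    {I J : Type u}
    (TM : M ≃ₗ[A] cA v hA.isRingNorm I) (hTM : ∀ m : M, nmM m = cNorm v (TM m))
    (TN : N ≃ₗ[A] cA v hA.isRingNorm J) (hTN : ∀ x : N, nmN x = cNorm v (TN x))
    (φ : M →ₗ[A] N) (hφ : NormContinuous nmM nmN φ) :
    IsCompactOp nmM nmN φ ↔
      ∀ ε : ℝ, 0 < ε →
        {j : J | ε < ⨆ i : I, v (matrixCoef v hA.isRingNorm TM TN φ i j)}.Finite := by
  classical
  obtain ⟨ϖ, huϖ, h1ϖ, hmulϖ⟩ := hA.exists_unit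
  have hv := hA.isRingNorm
  obtain ⟨Cφ, hCφ, hφb⟩ := bounded_of_normContinuous hA.isRingNorm huϖ h1ϖ hmulϖ hnmM hnmN φ hφ
  set e : I → M := fun i => TM.symm (stdDelta v hA.isRingNorm i) with he
  have hnme : ∀ i, nmM (e i) ≤ 1 := by
    intro i
    rw [he, hTM, LinearEquiv.apply_symm_apply]
    exact cNorm_stdDelta_le_one i
  have hmc : ∀ (ψ : M →ₗ[A] N) (i : I) (j : J),
      matrixCoef v hA.isRingNorm TM TN ψ i j = ((TN (ψ (e i)) : cA v hA.isRingNorm J) : J → A) j :=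
    fun ψ i j => rfl
  constructor
  · -- forward direction
    rintro ⟨-, hcpt⟩ ε hε
    obtain ⟨g, hgc, hgfr, hgerr⟩ := hcpt ε hε
    obtain ⟨P, hPfg, hPrange⟩ := hgfr
    obtain ⟨p, hpspan⟩ := hPfg
    obtain ⟨Cg, hCgpos, hgb⟩ :=
      bounded_of_normContinuous hA.isRingNorm huϖ h1ϖ hmulϖ hnmM hnmN g hgc
    have hrange : ∀ x : M, g x ∈ Submodule.span A (↑p : Set N) := by
      intro x
      rw [hpspan]
      exact hPrange (LinearMap.mem_range_self g x)
    obtain ⟨C, hCpos, hgen⟩ := bounded_generation hA.isRingNorm hA.complete huϖ h1ϖ hmulϖ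
      hnmM hcompM hnmN g hCgpos hgb p hrange
    have hSfin : ∀ q ∈ (↑p : Set N), {j : J | ε / C < v ((TN q : J → A) j)}.Finite :=
      fun q _ => (TN q).2 (ε / C) (div_pos hε hCpos)
    apply Set.Finite.subset (Set.Finite.biUnion p.finite_toSet hSfin)
    intro j hj
    simp only [Set.mem_setOf_eq] at hj
    by_contra hjn
    have hq_small : ∀ q ∈ p, v ((TN q : J → A) j) ≤ ε / C := by
      intro q hq
      by_contra hcon
      push_neg at hcon
      exact hjn (Set.mem_biUnion hq hcon)
    -- the matrix entries of g in column j are at most ε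
    have hbij : ∀ i : I, v (((TN (g (e i)) : cA v hA.isRingNorm J) : J → A) j) ≤ ε := by
      intro i
      obtain ⟨c, hcq, hcb⟩ := hgen (e i)
      have h4 : ((TN (g (e i)) : cA v hA.isRingNorm J) : J → A) j
          = ∑ q ∈ p, c q * ((TN q : J → A) j) := by
        rw [hcq, map_sum, coe_sum_apply]
        refine Finset.sum_congr rfl fun q _ => ?_
        rw [map_smul]
        rfl
      rw [h4]
      apply ultra_sum_le v hA.isRingNorm.map_zero hA.isRingNorm.add_le _ _ hε.le
      intro q hq
      have hc1 : v (c q) ≤ C := by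
        calc v (c q) ≤ C * nmM (e i) := hcb q hq
          _ ≤ C * 1 := mul_le_mul_of_nonneg_left (hnme i) hCpos.le
          _ = C := mul_one C
      calc v (c q * ((TN q : J → A) j)) ≤ v (c q) * v ((TN q : J → A) j) :=
            hA.isRingNorm.mul_le _ _
        _ ≤ C * (ε / C) := mul_le_mul hc1 (hq_small q hq) (hA.isRingNorm.nonneg _) hCpos.le
        _ = ε := by field_simp
    -- the matrix entries of φ in column j are at most ε
    have haij : ∀ i : I, v (matrixCoef v hA.isRingNorm TM TN φ i j) ≤ ε := by
      intro i
      have hdiff : v (matrixCoef v hA.isRingNorm TM TN φ i j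
          - (((TN (g (e i)) : cA v hA.isRingNorm J) : J → A) j)) ≤ ε := by
        have hcoord : matrixCoef v hA.isRingNorm TM TN φ i j
            - (((TN (g (e i)) : cA v hA.isRingNorm J) : J → A) j)
            = ((TN (φ (e i) - g (e i)) : cA v hA.isRingNorm J) : J → A) j := by
          rw [map_sub]
          rfl
        rw [hcoord]
        calc v (((TN (φ (e i) - g (e i)) : cA v hA.isRingNorm J) : J → A) j)
            ≤ cNorm v (TN (φ (e i) - g (e i))) := le_cNorm _ j
          _ = nmN (φ (e i) - g (e i)) := (hTN _).symm
          _ ≤ ε * nmM (e i) := hgerr (e i)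
          _ ≤ ε := by nlinarith [hnme i, hnmM.nonneg (e i)]
      have h5 := ultra_le_max_sub v hA.isRingNorm.add_le
        (matrixCoef v hA.isRingNorm TM TN φ i j) (((TN (g (e i)) : cA v hA.isRingNorm J) : J → A) j)
      exact le_trans h5 (max_le hdiff (hbij i))
    exact absurd (Real.iSup_le haij hε.le) (not_le.mpr hj)
  · -- backward direction
    intro hfin
    refine ⟨hφ, fun ε hε => ?_⟩
    set Sf := (hfin ε hε).toFinset with hSf
    set g : M →ₗ[A] N :=
      TN.symm.toLinearMap ∘ₗ projCA v hA.isRingNorm Sf ∘ₗ TN.toLinearMap ∘ₗ φ with hg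
    have hgapp : ∀ m, g m = TN.symm (projCA v hA.isRingNorm Sf (TN (φ m))) := fun m => rfl
    have hTNg : ∀ m, TN (g m) = projCA v hA.isRingNorm Sf (TN (φ m)) := by
      intro m
      rw [hgapp, LinearEquiv.apply_symm_apply]
    -- boundedness of g
    have hgb : ∀ m, nmN (g m) ≤ Cφ * nmM m := by
      intro m
      rw [hTN, hTNg]
      have hle : cNorm v (projCA v hA.isRingNorm Sf (TN (φ m))) ≤ cNorm v (TN (φ m)) := by
        apply cNorm_le _ (cNorm_nonneg _)
        intro j
        show v (if j ∈ Sf then ((TN (φ m) : cA v hA.isRingNorm J) : J → A) j else 0) ≤ _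
        split
        · exact le_cNorm _ j
        · rw [hA.isRingNorm.map_zero]
          exact cNorm_nonneg _
      calc cNorm v (projCA v hA.isRingNorm Sf (TN (φ m))) ≤ cNorm v (TN (φ m)) := hle
        _ = nmN (φ m) := (hTN _).symm
        _ ≤ Cφ * nmM m := hφb m
    refine ⟨g, normContinuous_of_bounded (v := v) g hCφ hgb, ?_, ?_⟩
    · -- finite rank
      refine ⟨Submodule.map TN.symm.toLinearMap
        (Submodule.span A (stdDelta v hA.isRingNorm '' ↑Sf)), ?_, ?_⟩
      · exact Submodule.FG.map _ (Submodule.fg_span (Sf.finite_toSet.image _))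
      · rintro y ⟨m, rfl⟩
        refine ⟨projCA v hA.isRingNorm Sf (TN (φ m)), ?_, rfl⟩
        rw [projCA_eq_sum]
        apply Submodule.sum_mem
        intro i hi
        exact Submodule.smul_mem _ _ (Submodule.subset_span ⟨i, by simpa using hi, rfl⟩)
    · -- the error bound
      intro m
      have hcoordbound : ∀ j : J, j ∉ Sf →
          v (((TN (φ m) : cA v hA.isRingNorm J) : J → A) j) ≤ ε * nmM m := by
        intro j hj
        have hjn : ¬ ε < ⨆ i : I, v (matrixCoef v hA.isRingNorm TM TN φ i j) := by
          intro hcon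
          exact hj ((hfin ε hε).mem_toFinset.mpr hcon)
        push_neg at hjn
        -- column j of the matrix of φ is bounded by ε
        have hbdd : BddAbove (Set.range fun i : I => v (matrixCoef v hA.isRingNorm TM TN φ i j)) := by
          refine ⟨Cφ, ?_⟩
          rintro r ⟨i, rfl⟩
          show v (matrixCoef v hA.isRingNorm TM TN φ i j) ≤ Cφ
          rw [hmc]
          calc v (((TN (φ (e i)) : cA v hA.isRingNorm J) : J → A) j)
              ≤ cNorm v (TN (φ (e i))) := le_cNorm _ j
            _ = nmN (φ (e i)) := (hTN _).symm
            _ ≤ Cφ * nmM (e i) := hφb _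
            _ ≤ Cφ := by nlinarith [hnme i, hnmM.nonneg (e i)]
        have hsupj : ∀ i : I, v (matrixCoef v hA.isRingNorm TM TN φ i j) ≤ ε :=
          fun i => le_trans (le_ciSup hbdd i) hjn
        -- approximate m by finite truncations
        apply aux_le_of_forall_le_max (mul_nonneg hε.le (hnmM.nonneg m))
        intro η hη
        obtain ⟨F, hF⟩ := exists_tail_small (TM m) (div_pos hη hCφ)
        set mF : M := TM.symm (projCA v hA.isRingNorm F (TM m)) with hmF
        have htail : nmM (m - mF) ≤ η / Cφ / 2 := by
          rw [hTM, map_sub, LinearEquiv.apply_symm_apply]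
          exact hF
        have hfirst : v (((TN (φ m) : cA v hA.isRingNorm J) : J → A) j
            - ((TN (φ mF) : cA v hA.isRingNorm J) : J → A) j) ≤ η := by
          have hco : ((TN (φ m) : cA v hA.isRingNorm J) : J → A) j
              - ((TN (φ mF) : cA v hA.isRingNorm J) : J → A) j
              = ((TN (φ (m - mF)) : cA v hA.isRingNorm J) : J → A) j := by
            rw [map_sub, map_sub]
            rfl
          rw [hco]
          calc v (((TN (φ (m - mF)) : cA v hA.isRingNorm J) : J → A) j)
              ≤ cNorm v (TN (φ (m - mF))) := le_cNorm _ j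
            _ = nmN (φ (m - mF)) := (hTN _).symm
            _ ≤ Cφ * nmM (m - mF) := hφb _
            _ ≤ Cφ * (η / Cφ / 2) := mul_le_mul_of_nonneg_left htail hCφ.le
            _ = η / 2 := by field_simp [hCφ.ne']
            _ ≤ η := by linarith
        have hsecond : v (((TN (φ mF) : cA v hA.isRingNorm J) : J → A) j) ≤ ε * nmM m := by
          have hrw : φ mF = ∑ i ∈ F, ((TM m : cA v hA.isRingNorm I) : I → A) i • φ (e i) := by
            rw [hmF, projCA_eq_sum, map_sum, map_sum]
            refine Finset.sum_congr rfl fun i _ => ?_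
            rw [map_smul, map_smul]
          have hco : ((TN (φ mF) : cA v hA.isRingNorm J) : J → A) j
              = ∑ i ∈ F, ((TM m : cA v hA.isRingNorm I) : I → A) i
                  * (((TN (φ (e i)) : cA v hA.isRingNorm J) : J → A) j) := by
            rw [hrw, map_sum, coe_sum_apply]
            refine Finset.sum_congr rfl fun i _ => ?_
            rw [map_smul]
            rfl
          rw [hco]
          apply ultra_sum_le v hA.isRingNorm.map_zero hA.isRingNorm.add_le _ _
            (mul_nonneg hε.le (hnmM.nonneg m))
          intro i _
          have h6 : v (((TM m : cA v hA.isRingNorm I) : I → A) i) ≤ nmM m := by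
            rw [hTM]
            exact le_cNorm _ i
          have h7 := hsupj i
          rw [hmc] at h7
          calc v (((TM m : cA v hA.isRingNorm I) : I → A) i
                * (((TN (φ (e i)) : cA v hA.isRingNorm J) : J → A) j))
              ≤ v (((TM m : cA v hA.isRingNorm I) : I → A) i)
                * v (((TN (φ (e i)) : cA v hA.isRingNorm J) : J → A) j) :=
                hA.isRingNorm.mul_le _ _
            _ ≤ nmM m * ε := mul_le_mul h6 h7 (hA.isRingNorm.nonneg _) (hnmM.nonneg m)
            _ = ε * nmM m := mul_comm _ _
        have h8 := ultra_le_max_sub v hA.isRingNorm.add_le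
          (((TN (φ m) : cA v hA.isRingNorm J) : J → A) j)
          (((TN (φ mF) : cA v hA.isRingNorm J) : J → A) j)
        exact le_trans h8 (max_le (le_trans hfirst (le_max_left _ _))
          (le_trans hsecond (le_max_right _ _)))
      -- conclude
      rw [hTN, map_sub, hTNg]
      apply cNorm_le _ (mul_nonneg hε.le (hnmM.nonneg m))
      intro j
      have hco : ((TN (φ m) - projCA v hA.isRingNorm Sf (TN (φ m)) : cA v hA.isRingNorm J) : J → A) j
          = ((TN (φ m) : cA v hA.isRingNorm J) : J → A) j
            - (if j ∈ Sf then ((TN (φ m) : cA v hA.isRingNorm J) : J → A) j else 0) := rfl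
      rw [hco]
      by_cases hj : j ∈ Sf
      · rw [if_pos hj, sub_self, hA.isRingNorm.map_zero]
        exact mul_nonneg hε.le (hnmM.nonneg m)
      · rw [if_neg hj, sub_zero]
        exact hcoordbound j hj
end
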